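/- arXiv:2203.10570 — 16 statements merged into one kernel-verified Lean document; each statement's English description precedes it below -/
import Mathlib

section
/- Let P be a partially ordered set and H : P → P an isotone (monotone) operation such that H(H(x)) ≤ H(x) for every x ∈ P. If every nonempty chain contained in the range of H has a greatest lower bound in P, then there exists an operation K : P → P which is isotone, idempotent (K(K(x)) = K(x) for all x), pointwise smaller than H (K(x) ≤ H(x) for all x), and largest such: every isotone idempotent operation J : P → P with J(x) ≤ H(x) for all x satisfies J(x) ≤ K(x) for all x. -/
/-!
Take `K x` to be the greatest `p ≤ H x` with `p ≤ H p`. Every candidate `J x` is such a `p`,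
because `J x = J (J x) ≤ H (J x)`, and monotonicity and idempotency of `K` follow from
maximality alone. The greatest such `p` is found by Zorn's lemma, applied downwards to the
elements of the range of `H` below `H x` that bound all candidates from above: a chain of them
has a glb `g`, and `H g` is a lower bound of the chain in the same set. A minimal element `m`
satisfies `H m = m`, since `H m` is in the set and `H m ≤ m`, so `m` is itself a candidate.
-/

theorem exists_isGreatest_le_map_of_map_le {P : Type*} [PartialOrder P] {H : P → P}
    (hmono : Monotone H) (hHH : ∀ x, H (H x) ≤ H x)
    (hchain : ∀ C : Set P, C ⊆ Set.range H → IsChain (· ≤ ·) C → C.Nonempty →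
      ∃ g, IsGLB C g)
    {b : P} (hb : H b ≤ b) : ∃ m, IsGreatest {p | p ≤ H p ∧ p ≤ b} m := by
  set S := {p | p ≤ H p ∧ p ≤ b}
  set D := {y | y ∈ Set.range H ∧ y ≤ b ∧ y ∈ upperBounds S}
  have map_mem : ∀ y, H y ≤ b → y ∈ upperBounds S → H y ∈ D :=
    fun y hyb hy => ⟨⟨y, rfl⟩, hyb, fun p hp => hp.1.trans (hmono (hy hp))⟩
  have map_le_of_mem : ∀ y ∈ D, H y ≤ y := by
    rintro _ ⟨⟨x, rfl⟩, -⟩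
    exact hHH x
  have chain_lowerBound : ∀ c ⊆ D, IsChain (· ≤ ·) c → c.Nonempty → ∃ l ∈ D, ∀ z ∈ c, l ≤ z := by
    intro c hcD hc ⟨z₀, hz₀⟩
    obtain ⟨g, hg⟩ := hchain c (fun z hz => (hcD hz).1) hc ⟨z₀, hz₀⟩
    have map_glb_le : ∀ z ∈ c, H g ≤ z := fun z hz =>
      (hmono (hg.1 hz)).trans (map_le_of_mem z (hcD hz))
    refine ⟨H g, map_mem g ((map_glb_le z₀ hz₀).trans (hcD hz₀).2.1) ?_, map_glb_le⟩
    exact fun p hp => hg.2 fun z hz => (hcD hz).2.2 hp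
  obtain ⟨m, hmin⟩ : ∃ m, Minimal (· ∈ D) m := by
    obtain ⟨m, -, hm⟩ := @zorn_le_nonempty₀ Pᵒᵈ _ D
      (fun c hcD hc y hy => chain_lowerBound c hcD hc.symm ⟨y, hy⟩) (H b)
      (map_mem b hb fun p hp => hp.2)
    exact ⟨m, hm.prop, fun y hy hym => hm.2 hy hym⟩
  have hmD : m ∈ D := hmin.prop
  have le_map_self : m ≤ H m :=
    hmin.2 (map_mem m ((hmono hmD.2.1).trans hb) hmD.2.2) (map_le_of_mem m hmD)
  exact ⟨m, ⟨le_map_self, hmD.2.1⟩, hmD.2.2⟩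

/-- Lemma: if `H` is isotone with `H (H x) ≤ H x` and every nonempty chain in the
range of `H` has a greatest lower bound, then there is a largest isotone idempotent
operation pointwise smaller than `H`. -/
theorem largest_isotone_idempotent_below {P : Type*} [PartialOrder P] (H : P → P)
    (hmono : Monotone H) (hHH : ∀ x, H (H x) ≤ H x)
    (hchain : ∀ C : Set P, C ⊆ Set.range H → IsChain (· ≤ ·) C → C.Nonempty →
      ∃ g, IsGLB C g) :
    ∃ K : P → P, Monotone K ∧ (∀ x, K (K x) = K x) ∧ (∀ x, K x ≤ H x) ∧
      ∀ J : P → P, Monotone J → (∀ x, J (J x) = J x) → (∀ x, J x ≤ H x) →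
        ∀ x, J x ≤ K x := by
  choose K hK using fun x => exists_isGreatest_le_map_of_map_le hmono hHH hchain (hHH x)
  have le_map_self : ∀ x, K x ≤ H (K x) := fun x => (hK x).1.1
  have le_map : ∀ x, K x ≤ H x := fun x => (hK x).1.2
  have le_of_le_map : ∀ {p x}, p ≤ H p → p ≤ H x → p ≤ K x := fun hp hpx => (hK _).2 ⟨hp, hpx⟩
  have monotone : Monotone K := fun x y hxy =>
    le_of_le_map (le_map_self x) ((le_map x).trans (hmono hxy))
  have idempotent : ∀ x, K (K x) = K x := fun x => le_antisymm
    (le_of_le_map (le_map_self _) ((le_map _).trans ((hmono (le_map x)).trans (hHH x))))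
    (le_of_le_map (le_map_self x) (le_map_self x))
  exact ⟨K, monotone, idempotent, le_map,
    fun J _ hJJ hJH x => le_of_le_map ((hJJ x).ge.trans (hJH (J x))) (hJH x)⟩
end

section
/- Let P be a complete lattice and (K_i)_{i ∈ I} a family of isotone idempotent operations on P. Then there exists an isotone idempotent operation K : P → P such that K(x) ≤ K_i(x) for every i ∈ I and every x ∈ P, and K is largest with this property: every isotone idempotent operation J on P with J(x) ≤ K_i(x) for all i and x satisfies J(x) ≤ K(x) for all x. -/
/-- In a complete lattice, any family of isotone idempotent operations has a largest
isotone idempotent lower bound. -/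
theorem largest_isotone_idempotent_below_family {P : Type*} [CompleteLattice P]
    {I : Type*} (K : I → P → P)
    (hmono : ∀ i, Monotone (K i)) (hidem : ∀ i x, K i (K i x) = K i x) :
    ∃ K₀ : P → P, Monotone K₀ ∧ (∀ x, K₀ (K₀ x) = K₀ x) ∧
      (∀ i x, K₀ x ≤ K i x) ∧
      ∀ J : P → P, Monotone J → (∀ x, J (J x) = J x) →
        (∀ i x, J x ≤ K i x) → ∀ x, J x ≤ K₀ x := by
  set K₀ : P → P := fun x => sSup {y | (∀ i, y ≤ K i y) ∧ y ≤ ⨅ i, K i x} with hK₀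
  have hle : ∀ x, K₀ x ≤ ⨅ i, K i x := fun x => sSup_le fun y hy => hy.2
  have hlei : ∀ i x, K₀ x ≤ K i x := fun i x => (hle x).trans (iInf_le _ i)
  have hD : ∀ x i, K₀ x ≤ K i (K₀ x) := by
    intro x i
    exact sSup_le fun y hy => (hy.1 i).trans (hmono i (le_sSup hy))
  have hKmono : Monotone K₀ := by
    intro a b hab
    exact sSup_le_sSup fun y hy =>
      ⟨hy.1, hy.2.trans (le_iInf fun i => (iInf_le _ i).trans (hmono i hab))⟩
  refine ⟨K₀, hKmono, ?_, hlei, ?_⟩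
  · intro x
    apply le_antisymm
    · apply sSup_le
      intro y hy
      refine le_sSup ⟨hy.1, hy.2.trans (le_iInf fun i => ?_)⟩
      exact (iInf_le _ i).trans (le_of_le_of_eq (hmono i (hlei i x)) (hidem i x))
    · exact le_sSup ⟨fun i => hD x i, le_iInf fun i => hD x i⟩
  · intro J hJmono hJidem hJle x
    refine le_sSup ⟨fun i => ?_, le_iInf fun i => hJle i x⟩
    calc J x = J (J x) := (hJidem x).symm
    _ ≤ K i (J x) := hJle i (J x)
end

section
/- The class of partially ordered sets has the superamalgamation property: for all posets A, B, C and order embeddings f : C → A, g : C → B, there exist a poset D and order embeddings h : A → D, k : B → D such that h ∘ f = k ∘ g; whenever h(a) = k(b) there is c ∈ C with a = f(c) and b = g(c); whenever h(a) ≤ k(b) there is c ∈ C with a ≤ f(c) and g(c) ≤ b; and whenever k(b) ≤ h(a) there is c ∈ C with b ≤ g(c) and f(c) ≤ a. -/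
universe u

namespace PosetSuperamalg

variable {A B C : Type u} [PartialOrder A] [PartialOrder B] [PartialOrder C]
  (f : C ↪o A) (g : C ↪o B)

/-- Identify `f c` with `g c` in the sum. -/
def pRel : A ⊕ B → A ⊕ B → Prop
  | .inl a, .inl a' => a = a'
  | .inl a, .inr b => ∃ c, a = f c ∧ b = g c
  | .inr b, .inl a => ∃ c, a = f c ∧ b = g c
  | .inr b, .inr b' => b = b'

/-- The amalgamated order on the sum. -/
def pLe : A ⊕ B → A ⊕ B → Prop
  | .inl a, .inl a' => a ≤ a'
  | .inl a, .inr b => ∃ c, a ≤ f c ∧ g c ≤ b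
  | .inr b, .inl a => ∃ c, b ≤ g c ∧ f c ≤ a
  | .inr b, .inr b' => b ≤ b'

theorem pRel_refl : ∀ x, pRel f g x x
  | .inl _ => rfl
  | .inr _ => rfl

theorem pRel_symm : ∀ {x y}, pRel f g x y → pRel f g y x
  | .inl _, .inl _, h => h.symm
  | .inl _, .inr _, h => h
  | .inr _, .inl _, h => h
  | .inr _, .inr _, h => h.symm

theorem pRel_trans : ∀ {x y z}, pRel f g x y → pRel f g y z → pRel f g x z
  | .inl _, .inl _, .inl _, h, h' => h.trans h'
  | .inl _, .inl _, .inr _, h, h' => h ▸ h'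
  | .inl _, .inr _, .inl _, ⟨c, hc1, hc2⟩, ⟨c', hc1', hc2'⟩ => by
      obtain rfl : c = c' := g.injective (hc2 ▸ hc2')
      exact hc1.trans hc1'.symm
  | .inl _, .inr _, .inr _, h, h' => h' ▸ h
  | .inr _, .inl _, .inl _, ⟨c, hc1, hc2⟩, h' => ⟨c, h' ▸ hc1, hc2⟩
  | .inr _, .inl _, .inr _, ⟨c, hc1, hc2⟩, ⟨c', hc1', hc2'⟩ => by
      obtain rfl : c = c' := f.injective (hc1 ▸ hc1')
      exact hc2.trans hc2'.symm
  | .inr _, .inr _, .inl _, h, h' => by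
      obtain ⟨c, hc1, hc2⟩ := h'; exact ⟨c, hc1, h ▸ hc2⟩
  | .inr _, .inr _, .inr _, h, h' => h.trans h'

theorem pLe_refl : ∀ x, pLe f g x x
  | .inl _ => le_refl _
  | .inr _ => le_refl _

theorem pLe_trans : ∀ {x y z}, pLe f g x y → pLe f g y z → pLe f g x z
  | .inl _, .inl _, .inl _, h, h' => h.trans h'
  | .inl _, .inl _, .inr _, h, ⟨c, hc1, hc2⟩ => ⟨c, h.trans hc1, hc2⟩
  | .inl _, .inr _, .inl _, ⟨c, hc1, hc2⟩, ⟨c', hc1', hc2'⟩ => by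
      have : c ≤ c' := g.le_iff_le.mp (hc2.trans hc1')
      exact hc1.trans ((f.le_iff_le.mpr this).trans hc2')
  | .inl _, .inr _, .inr _, ⟨c, hc1, hc2⟩, h' => ⟨c, hc1, hc2.trans h'⟩
  | .inr _, .inl _, .inl _, ⟨c, hc1, hc2⟩, h' => ⟨c, hc1, hc2.trans h'⟩
  | .inr _, .inl _, .inr _, ⟨c, hc1, hc2⟩, ⟨c', hc1', hc2'⟩ => by
      have hcc : c ≤ c' := f.le_iff_le.mp (hc2.trans hc1')
      exact hc1.trans ((g.le_iff_le.mpr hcc).trans hc2')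
  | .inr _, .inr _, .inl _, h, ⟨c, hc1, hc2⟩ => ⟨c, h.trans hc1, hc2⟩
  | .inr _, .inr _, .inr _, h, h' => h.trans h'

theorem pLe_antisymm : ∀ {x y}, pLe f g x y → pLe f g y x → pRel f g x y
  | .inl _, .inl _, h, h' => le_antisymm h h'
  | .inl a, .inr b, ⟨c, hc1, hc2⟩, ⟨c', hc1', hc2'⟩ => by
      have hcc : c ≤ c' := g.le_iff_le.mp (hc2.trans hc1')
      have hcc' : c' ≤ c := f.le_iff_le.mp (hc2'.trans hc1)
      obtain rfl : c = c' := le_antisymm hcc hcc'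
      exact ⟨c, le_antisymm hc1 hc2', le_antisymm hc1' hc2⟩
  | .inr b, .inl a, ⟨c, hc1, hc2⟩, ⟨c', hc1', hc2'⟩ => by
      have hcc : c' ≤ c := g.le_iff_le.mp (hc2'.trans hc1)
      have hcc' : c ≤ c' := f.le_iff_le.mp (hc2.trans hc1')
      obtain rfl : c = c' := le_antisymm hcc' hcc
      exact ⟨c, le_antisymm hc1' hc2, le_antisymm hc1 hc2'⟩
  | .inr _, .inr _, h, h' => le_antisymm h h'

theorem pLe_congr_left : ∀ {x x' y}, pRel f g x x' → pLe f g x y → pLe f g x' y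
  | .inl _, .inl _, _, h, h' => h ▸ h'
  | .inl _, .inr _, .inl _, ⟨c, rfl, rfl⟩, h' => ⟨c, le_rfl, h'⟩
  | .inl _, .inr _, .inr _, ⟨c, rfl, rfl⟩, ⟨c', hc1', hc2'⟩ => by
      have : c ≤ c' := f.le_iff_le.mp hc1'
      exact (g.le_iff_le.mpr this).trans hc2'
  | .inr _, .inl _, .inl _, ⟨c, rfl, rfl⟩, ⟨c', hc1', hc2'⟩ => by
      have : c ≤ c' := g.le_iff_le.mp hc1'
      exact (f.le_iff_le.mpr this).trans hc2'
  | .inr _, .inl _, .inr _, ⟨c, rfl, rfl⟩, h' => ⟨c, le_rfl, h'⟩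
  | .inr _, .inr _, _, h, h' => h ▸ h'

theorem pLe_congr_right : ∀ {x y y'}, pRel f g y y' → pLe f g x y → pLe f g x y'
  | _, .inl _, .inl _, h, h' => h ▸ h'
  | .inl _, .inl _, .inr _, ⟨c, rfl, rfl⟩, h' => ⟨c, h', le_rfl⟩
  | .inr _, .inl _, .inr _, ⟨c, rfl, rfl⟩, ⟨c', hc1', hc2'⟩ => by
      have : c' ≤ c := f.le_iff_le.mp hc2'
      exact hc1'.trans (g.le_iff_le.mpr this)
  | .inl _, .inr _, .inl _, ⟨c, rfl, rfl⟩, ⟨c', hc1', hc2'⟩ => by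
      have : c' ≤ c := g.le_iff_le.mp hc2'
      exact hc1'.trans (f.le_iff_le.mpr this)
  | .inr _, .inr _, .inl _, ⟨c, rfl, rfl⟩, h' => ⟨c, h', le_rfl⟩
  | _, .inr _, .inr _, h, h' => h ▸ h'

def pSetoid : Setoid (A ⊕ B) :=
  ⟨pRel f g, pRel_refl f g, pRel_symm f g, pRel_trans f g⟩

def Amalg : Type u := Quotient (pSetoid f g)

def amalgLe (x y : Amalg f g) : Prop :=
  Quotient.liftOn₂ x y (pLe f g) fun _ _ _ _ h1 h2 =>
    propext ⟨fun h => pLe_congr_right f g h2 (pLe_congr_left f g h1 h),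
      fun h => pLe_congr_right f g (pRel_symm f g h2)
        (pLe_congr_left f g (pRel_symm f g h1) h)⟩

instance : PartialOrder (Amalg f g) where
  le := amalgLe f g
  le_refl x := Quotient.inductionOn x fun a => pLe_refl f g a
  le_trans x y z := Quotient.inductionOn₃ x y z
    fun _ _ _ h h' => pLe_trans f g h h'
  le_antisymm x y := Quotient.inductionOn₂ x y
    fun _ _ h h' => Quotient.sound (pLe_antisymm f g h h')

def amalgL : A ↪o Amalg f g :=
  OrderEmbedding.ofMapLEIff (fun a => Quotient.mk _ (Sum.inl a))
    fun _ _ => Iff.rfl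

def amalgR : B ↪o Amalg f g :=
  OrderEmbedding.ofMapLEIff (fun b => Quotient.mk _ (Sum.inr b))
    fun _ _ => Iff.rfl

end PosetSuperamalg

/-- The class of partially ordered sets has the superamalgamation property. -/
theorem poset_superamalgamation {A B C : Type u}
    [PartialOrder A] [PartialOrder B] [PartialOrder C]
    (f : C ↪o A) (g : C ↪o B) :
    ∃ (D : Type u) (_ : PartialOrder D) (h : A ↪o D) (k : B ↪o D),
      (∀ c, h (f c) = k (g c)) ∧
      (∀ a b, h a = k b → ∃ c, a = f c ∧ b = g c) ∧
      (∀ a b, h a ≤ k b → ∃ c, a ≤ f c ∧ g c ≤ b) ∧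
      (∀ a b, k b ≤ h a → ∃ c, b ≤ g c ∧ f c ≤ a) := by
  open PosetSuperamalg in
  refine ⟨Amalg f g, inferInstance, amalgL f g, amalgR f g, ?_, ?_, ?_, ?_⟩
  · intro c
    exact Quotient.sound ⟨c, rfl, rfl⟩
  · intro a b hab
    exact Quotient.exact hab
  · intro a b hab
    exact hab
  · intro a b hab
    exact hab
end

section
/- The class of lattices has the superamalgamation property: for all lattices A, B, C and injective lattice homomorphisms f : C → A, g : C → B, there exist a lattice D and injective lattice homomorphisms h : A → D, k : B → D such that h ∘ f = k ∘ g; whenever h(a) = k(b) there is c ∈ C with a = f(c) and b = g(c); whenever h(a) ≤ k(b) there is c ∈ C with a ≤ f(c) and g(c) ≤ b; and whenever k(b) ≤ h(a) there is c ∈ C with b ≤ g(c) and f(c) ≤ a. -/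
/-!
Put on the disjoint union `A ⊕ B` the preorder generated by the orders of `A` and `B` and the
identifications `f c ~ g c`: explicitly, `a ≤ b` iff `a ≤ f c` and `g c ≤ b` for some `c`, and
symmetrically. Since `f` and `g` reflect the order, this relation is transitive, and since they
preserve meets and joins, `a ⊓ a'` computed in `A` is still a greatest lower bound in `A ⊕ B`
(a lower bound `b ≤ g c, g c'` of both lies below `g (c ⊓ c')`), and dually for joins. The
Dedekind–MacNeille completion of this preorder is a lattice `D`, and the principal cuts preserve
every existing meet and join, so `A` and `B` embed into `D` as lattices. Comparisons between the
images of `A` and `B` in `D` are exactly the comparisons in the preorder, which is the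
superamalgamation property by construction; strong amalgamation follows by antisymmetry.
-/

universe u

open Set Function

namespace DedekindCut

variable {α β : Type*} [Preorder α]

theorem principal_eq_inf_of_isGLB {x y z : α} (h : IsGLB {x, y} z) :
    principal z = principal x ⊓ principal y := by
  ext w
  simp [isGLB_iff_le_iff.1 h w, lowerBounds_insert]

theorem principal_eq_sup_of_isLUB {x y z : α} (h : IsLUB {x, y} z) :
    principal z = principal x ⊔ principal y := by
  refine ext' (Set.ext fun w => ?_)
  simp [isLUB_iff_le_iff.1 h w, upperBounds_insert]

theorem principal_eq_principal_iff {x y : α} : principal x = principal y ↔ x ≤ y ∧ y ≤ x := by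
  simp [le_antisymm_iff]

variable [Lattice β]

def principalLatticeHom (e : β ↪o α) (he_inf : ∀ a b, IsGLB {e a, e b} (e (a ⊓ b)))
    (he_sup : ∀ a b, IsLUB {e a, e b} (e (a ⊔ b))) : LatticeHom β (DedekindCut α) where
  toFun a := principal (e a)
  map_sup' a b := principal_eq_sup_of_isLUB (he_sup a b)
  map_inf' a b := principal_eq_inf_of_isGLB (he_inf a b)

@[simp]
theorem principalLatticeHom_apply (e : β ↪o α) (he_inf) (he_sup) (b : β) :
    principalLatticeHom e he_inf he_sup b = principal (e b) :=
  rfl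

theorem principalLatticeHom_injective (e : β ↪o α) (he_inf) (he_sup) :
    Injective (principalLatticeHom e he_inf he_sup) := fun a b hab => by
  simpa [le_antisymm_iff] using hab

end DedekindCut

variable {A B C : Type*}

section Preorder

variable [Preorder A] [Preorder B] [Preorder C]

def Amalgam (_f : C ↪o A) (_g : C ↪o B) : Type _ := A ⊕ B

namespace Amalgam

variable (f : C ↪o A) (g : C ↪o B)

protected def LE : A ⊕ B → A ⊕ B → Prop
  | .inl a, .inl a' => a ≤ a'
  | .inl a, .inr b => ∃ c, a ≤ f c ∧ g c ≤ b
  | .inr b, .inl a => ∃ c, b ≤ g c ∧ f c ≤ a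
  | .inr b, .inr b' => b ≤ b'

instance : Preorder (Amalgam f g) where
  le := Amalgam.LE f g
  le_refl := by rintro (a | b) <;> exact le_rfl
  le_trans := by
    rintro (a | b) (a' | b') (a'' | b'') <;> simp only [Amalgam.LE]
    · exact le_trans
    · exact fun h ⟨c, hc⟩ => ⟨c, h.trans hc.1, hc.2⟩
    · rintro ⟨c, hac, hcb⟩ ⟨c', hbc', hca⟩
      exact hac.trans ((f.le_iff_le.2 (g.le_iff_le.1 (hcb.trans hbc'))).trans hca)
    · exact fun ⟨c, hc⟩ h => ⟨c, hc.1, hc.2.trans h⟩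
    · exact fun ⟨c, hc⟩ h => ⟨c, hc.1, hc.2.trans h⟩
    · rintro ⟨c, hbc, hca⟩ ⟨c', hac', hcb⟩
      exact hbc.trans ((g.le_iff_le.2 (f.le_iff_le.1 (hca.trans hac'))).trans hcb)
    · exact fun h ⟨c, hc⟩ => ⟨c, h.trans hc.1, hc.2⟩
    · exact le_trans

def inl : A ↪o Amalgam f g where
  toFun := Sum.inl
  inj' := Sum.inl_injective
  map_rel_iff' := Iff.rfl

def inr : B ↪o Amalgam f g where
  toFun := Sum.inr
  inj' := Sum.inr_injective
  map_rel_iff' := Iff.rfl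

variable {f g}

theorem inl_le_inr_iff {a : A} {b : B} : inl f g a ≤ inr f g b ↔ ∃ c, a ≤ f c ∧ g c ≤ b :=
  Iff.rfl

theorem inr_le_inl_iff {a : A} {b : B} : inr f g b ≤ inl f g a ↔ ∃ c, b ≤ g c ∧ f c ≤ a :=
  Iff.rfl

def swap : Amalgam f g ≃o Amalgam g f where
  toEquiv := Equiv.sumComm A B
  map_rel_iff' := by rintro (a | b) (a' | b') <;> rfl

@[simp] theorem swap_inl (a : A) : swap (inl f g a) = inr g f a := rfl

@[simp] theorem swap_inr (b : B) : swap (inr f g b) = inl g f b := rfl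

end Amalgam

end Preorder

namespace Amalgam

theorem inl_le_inr_and_inr_le_inl_iff [PartialOrder A] [PartialOrder B] [PartialOrder C]
    {f : C ↪o A} {g : C ↪o B} {a : A} {b : B} :
    inl f g a ≤ inr f g b ∧ inr f g b ≤ inl f g a ↔ ∃ c, a = f c ∧ b = g c := by
  simp only [inl_le_inr_iff, inr_le_inl_iff]
  constructor
  · rintro ⟨⟨c, hac, hcb⟩, ⟨c', hbc', hca⟩⟩
    obtain rfl : c = c' :=
      le_antisymm (g.le_iff_le.1 (hcb.trans hbc')) (f.le_iff_le.1 (hca.trans hac))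
    exact ⟨c, le_antisymm hac hca, le_antisymm hbc' hcb⟩
  · rintro ⟨c, rfl, rfl⟩
    exact ⟨⟨c, le_rfl, le_rfl⟩, ⟨c, le_rfl, le_rfl⟩⟩

section Lattice

variable [Lattice A] [Lattice B] [Lattice C] (f : LatticeHom C A) (g : LatticeHom C B)
  (hf : Injective f) (hg : Injective g)

theorem isGLB_inl (a a' : A) :
    IsGLB {inl (orderEmbeddingOfInjective f hf) (orderEmbeddingOfInjective g hg) a, inl _ _ a'}
      (inl _ _ (a ⊓ a')) := by
  refine ⟨by simp [lowerBounds_insert], fun x hx => ?_⟩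
  simp only [lowerBounds_insert, lowerBounds_singleton, mem_inter_iff, mem_Iic] at hx
  rcases x with a'' | b
  · exact le_inf hx.1 hx.2
  · obtain ⟨⟨c, hbc, hca⟩, ⟨c', hbc', hca'⟩⟩ := hx
    refine ⟨c ⊓ c', ?_, ?_⟩ <;> simp only [orderEmbeddingOfInjective_apply, map_inf] at *
    · exact le_inf hbc hbc'
    · exact inf_le_inf hca hca'

theorem isLUB_inl (a a' : A) :
    IsLUB {inl (orderEmbeddingOfInjective f hf) (orderEmbeddingOfInjective g hg) a, inl _ _ a'}
      (inl _ _ (a ⊔ a')) := by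
  refine ⟨by simp [upperBounds_insert], fun x hx => ?_⟩
  simp only [upperBounds_insert, upperBounds_singleton, mem_inter_iff, mem_Ici] at hx
  rcases x with a'' | b
  · exact sup_le hx.1 hx.2
  · obtain ⟨⟨c, hac, hcb⟩, ⟨c', hac', hcb'⟩⟩ := hx
    refine ⟨c ⊔ c', ?_, ?_⟩ <;> simp only [orderEmbeddingOfInjective_apply, map_sup] at *
    · exact sup_le_sup hac hac'
    · exact sup_le hcb hcb'

theorem isGLB_inr (b b' : B) :
    IsGLB {inr (orderEmbeddingOfInjective f hf) (orderEmbeddingOfInjective g hg) b, inr _ _ b'}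
      (inr _ _ (b ⊓ b')) :=
  swap.isGLB_image'.1 (by simpa [image_pair] using isGLB_inl g f hg hf b b')

theorem isLUB_inr (b b' : B) :
    IsLUB {inr (orderEmbeddingOfInjective f hf) (orderEmbeddingOfInjective g hg) b, inr _ _ b'}
      (inr _ _ (b ⊔ b')) :=
  swap.isLUB_image'.1 (by simpa [image_pair] using isLUB_inl g f hg hf b b')

end Lattice

end Amalgam

/-- The class of lattices has the superamalgamation property. -/
theorem lattice_superamalgamation {A B C : Type u}
    [Lattice A] [Lattice B] [Lattice C]
    (f : LatticeHom C A) (g : LatticeHom C B)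
    (hf : Function.Injective f) (hg : Function.Injective g) :
    ∃ (D : Type u) (_ : Lattice D) (h : LatticeHom A D) (k : LatticeHom B D),
      Function.Injective h ∧ Function.Injective k ∧
      (∀ c, h (f c) = k (g c)) ∧
      (∀ a b, h a = k b → ∃ c, a = f c ∧ b = g c) ∧
      (∀ a b, h a ≤ k b → ∃ c, a ≤ f c ∧ g c ≤ b) ∧
      (∀ a b, k b ≤ h a → ∃ c, b ≤ g c ∧ f c ≤ a) := by
  open Amalgam DedekindCut in
  refine ⟨_, inferInstance, principalLatticeHom _ (isGLB_inl f g hf hg) (isLUB_inl f g hf hg),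
    principalLatticeHom _ (isGLB_inr f g hf hg) (isLUB_inr f g hf hg),
    principalLatticeHom_injective _ _ _, principalLatticeHom_injective _ _ _, fun c => ?_,
    fun a b hab => ?_, fun a b hab => ?_, fun a b hab => ?_⟩
  · exact principal_eq_principal_iff.2 (inl_le_inr_and_inr_le_inl_iff.2 ⟨c, rfl, rfl⟩)
  · simpa using inl_le_inr_and_inr_le_inl_iff.1 (principal_eq_principal_iff.1 hab)
  · simpa [inl_le_inr_iff] using hab
  · simpa [inr_le_inl_iff] using hab
end

section
/- The class of Boolean algebras has the superamalgamation property: for all Boolean algebras A, B, C and injective Boolean algebra homomorphisms (bounded lattice homomorphisms) f : C → A, g : C → B, there exist a Boolean algebra D and injective Boolean algebra homomorphisms h : A → D, k : B → D such that h ∘ f = k ∘ g; whenever h(a) = k(b) there is c ∈ C with a = f(c) and b = g(c); whenever h(a) ≤ k(b) there is c ∈ C with a ≤ f(c) and g(c) ≤ b; and whenever k(b) ≤ h(a) there is c ∈ C with b ≤ g(c) and f(c) ≤ a. -/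
/-!
Take for `D` the powerset of the pullback of the Stone spaces: the pairs `(p, q)` of prime ideals
of `A` and `B` with `f⁻¹ p = g⁻¹ q`, with `h a = {(p, q) | a ∉ p}` and `k b = {(p, q) | b ∉ q}`.
If no `c` has `a ≤ f c` and `g c ≤ b`, the filter `{c | a ≤ f c}` and the ideal `{c | g c ≤ b}`
of `C` are disjoint, so some prime ideal `r` of `C` separates them. Since prime ideals of a Boolean
algebra are maximal, `r` is `f⁻¹ p` for a prime `p ∌ a` and `g⁻¹ q` for a prime `q ∋ b`, and
`(p, q)` lies in `h a` but not in `k b`. Injectivity of `h` and `k` and strong amalgamation follow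
from superamalgamation and the injectivity of `f` and `g`.
-/

universe u

namespace Order

variable {α β γ : Type*}

section Lattice

variable [Lattice α] [BoundedOrder α] [Lattice β] [BoundedOrder β]

def Ideal.comap (f : BoundedLatticeHom α β) (I : Ideal β) : Ideal α where
  carrier := f ⁻¹' I
  lower' _ _ hle h := I.lower (OrderHomClass.mono f hle) h
  nonempty' := ⟨⊥, by simp⟩
  directed' x hx y hy := ⟨x ⊔ y, by simpa using I.sup_mem hx hy, le_sup_left, le_sup_right⟩

@[simp] theorem Ideal.mem_comap {f : BoundedLatticeHom α β} {I : Ideal β} {a : α} :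
    a ∈ I.comap f ↔ f a ∈ I := Iff.rfl

def Ideal.map (f : BoundedLatticeHom α β) (I : Ideal α) : Ideal β where
  carrier := {b | ∃ a ∈ I, b ≤ f a}
  lower' _ _ hle := fun ⟨a, ha, h⟩ => ⟨a, ha, hle.trans h⟩
  nonempty' := ⟨⊥, ⊥, I.bot_mem, bot_le⟩
  directed' := fun x ⟨a, ha, hx⟩ y ⟨a', ha', hy⟩ =>
    ⟨x ⊔ y, ⟨a ⊔ a', I.sup_mem ha ha', by simpa using sup_le_sup hx hy⟩,
      le_sup_left, le_sup_right⟩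

def PFilter.comap (f : BoundedLatticeHom α β) (F : PFilter β) : PFilter α :=
  ⟨F.dual.comap (BoundedLatticeHom.dual f)⟩

def Ideal.stoneHom {X : Type*} (P : X → Ideal α) (hP : ∀ x, (P x).IsPrime) :
    BoundedLatticeHom α (Set X) where
  toFun a := {x | a ∉ P x}
  map_sup' a b := by ext x; simp [Ideal.sup_mem_iff, imp_iff_not_or]
  map_inf' a b := by
    ext x
    simp only [Set.mem_ofPred_eq, Set.inf_eq_inter, Set.mem_inter_iff, ← not_or]
    exact not_congr ⟨(hP x).mem_or_mem, fun h => h.elim ((P x).lower inf_le_left)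
      ((P x).lower inf_le_right)⟩
  map_top' := by ext x; simpa using (hP x).top_notMem
  map_bot' := by ext x; simp

end Lattice

theorem Ideal.IsPrime.exists_isPrime_comap_eq [BooleanAlgebra α] [DistribLattice β]
    [BoundedOrder β] {f : BoundedLatticeHom α β} {r : Ideal α} (hr : r.IsPrime) {b : β}
    (hb : ∀ a ∈ r, ¬b ≤ f a) : ∃ p : Ideal β, p.IsPrime ∧ b ∉ p ∧ p.comap f = r := by
  have hdisj : Disjoint (PFilter.principal b : Set β) (r.map f : Set β) :=
    Set.disjoint_left.2 fun x hbx ⟨a, ha, hxa⟩ => hb a ha (le_trans hbx hxa)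
  obtain ⟨p, hp, hrp, hbp⟩ := DistribLattice.prime_ideal_of_disjoint_filter_ideal hdisj
  refine ⟨p, hp, Set.disjoint_left.1 hbp le_rfl, Ideal.ext (Set.ext fun a => ⟨fun hpa => ?_,
    fun ha => hrp ⟨a, ha, le_rfl⟩⟩)⟩
  by_contra ha
  have hac : f aᶜ ∈ p := hrp ⟨aᶜ, hr.compl_mem_of_notMem ha, le_rfl⟩
  exact hp.top_notMem (by simpa [← map_sup] using p.sup_mem hpa hac)

theorem Ideal.exists_isPrime_comap_eq_comap [BooleanAlgebra α] [BooleanAlgebra β]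
    [BooleanAlgebra γ] {f : BoundedLatticeHom γ α} {g : BoundedLatticeHom γ β} {a : α} {b : β}
    (hab : ∀ c, a ≤ f c → ¬g c ≤ b) :
    ∃ p : Ideal α, ∃ q : Ideal β, p.IsPrime ∧ q.IsPrime ∧ p.comap f = q.comap g ∧
      a ∉ p ∧ b ∈ q := by
  have hdisj : Disjoint ((PFilter.principal a).comap f : Set γ)
      ((Ideal.principal b).comap g : Set γ) :=
    Set.disjoint_left.2 fun c hac hcb => hab c hac hcb
  obtain ⟨r, hr, hbr, har⟩ := DistribLattice.prime_ideal_of_disjoint_filter_ideal hdisj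
  obtain ⟨p, hp, hap, hpr⟩ := hr.exists_isPrime_comap_eq fun c hc hac => Set.disjoint_left.1 har hac hc
  obtain ⟨q, hq, hbq, hqr⟩ := hr.exists_isPrime_comap_eq (b := bᶜ) fun c hc hbc =>
    hr.notMem_of_compl_mem (hbr (show g cᶜ ≤ b by simpa using compl_le_of_compl_le hbc)) hc
  exact ⟨p, q, hp, hq, hpr.trans hqr.symm, hap, hq.mem_or_compl_mem.resolve_right hbq⟩

end Order

open Order Function

section Amalgamation

variable {α β γ δ : Type*}

theorem BoundedLatticeHom.injective_of_map_eq_bot [BooleanAlgebra α] [BooleanAlgebra β]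
    (h : BoundedLatticeHom α β) (hbot : ∀ a, h a = ⊥ → a = ⊥) : Injective h :=
  fun a b hab => symmDiff_eq_bot.1 (hbot _ (by rw [map_symmDiff', hab, symmDiff_self]))

theorem BoundedLatticeHom.injective_of_superamalgamation [BooleanAlgebra α] [BooleanAlgebra δ]
    [Lattice β] [BoundedOrder β] [Lattice γ] [BoundedOrder γ] {f : BoundedLatticeHom γ α}
    {g : BoundedLatticeHom γ β} (hg : Injective g) {h : BoundedLatticeHom α δ}
    {k : BoundedLatticeHom β δ} (hle : ∀ a b, h a ≤ k b → ∃ c, a ≤ f c ∧ g c ≤ b) :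
    Injective h := by
  refine h.injective_of_map_eq_bot fun a ha => ?_
  obtain ⟨c, hac, hc⟩ := hle a ⊥ (by simp [ha])
  rw [le_bot_iff, ← map_bot g, hg.eq_iff] at hc
  simpa [hc] using hac

theorem exists_eq_of_superamalgamation [PartialOrder α] [PartialOrder β] [PartialOrder γ]
    [Preorder δ] (f : γ ↪o α) (g : γ ↪o β) {h : α → δ} {k : β → δ}
    (hle : ∀ a b, h a ≤ k b → ∃ c, a ≤ f c ∧ g c ≤ b)
    (hge : ∀ a b, k b ≤ h a → ∃ c, b ≤ g c ∧ f c ≤ a) {a : α} {b : β} (hab : h a = k b) :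
    ∃ c, a = f c ∧ b = g c := by
  obtain ⟨c₁, hac₁, hc₁b⟩ := hle a b hab.le
  obtain ⟨c₂, hbc₂, hc₂a⟩ := hge a b hab.ge
  have hc : c₁ = c₂ :=
    le_antisymm (g.le_iff_le.1 (hc₁b.trans hbc₂)) (f.le_iff_le.1 (hc₂a.trans hac₁))
  subst hc
  exact ⟨c₁, le_antisymm hac₁ hc₂a, le_antisymm hbc₂ hc₁b⟩

end Amalgamation

structure PrimePullback {α β γ : Type*} [Lattice α] [BoundedOrder α] [Lattice β]
    [BoundedOrder β] [Lattice γ] [BoundedOrder γ] (f : BoundedLatticeHom γ α)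
    (g : BoundedLatticeHom γ β) where
  left : Ideal α
  right : Ideal β
  isPrime_left : left.IsPrime
  isPrime_right : right.IsPrime
  comap_eq : left.comap f = right.comap g

namespace PrimePullback

section Lattice

variable {α β γ : Type*} [Lattice α] [BoundedOrder α] [Lattice β] [BoundedOrder β] [Lattice γ]
  [BoundedOrder γ] (f : BoundedLatticeHom γ α) (g : BoundedLatticeHom γ β)

def leftHom : BoundedLatticeHom α (Set (PrimePullback f g)) :=
  Ideal.stoneHom left isPrime_left

def rightHom : BoundedLatticeHom β (Set (PrimePullback f g)) :=
  Ideal.stoneHom right isPrime_right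

theorem leftHom_comp_eq (c : γ) : leftHom f g (f c) = rightHom f g (g c) :=
  Set.ext fun x => not_congr (SetLike.ext_iff.1 x.comap_eq c)

end Lattice

section BooleanAlgebra

variable {α β γ : Type*} [BooleanAlgebra α] [BooleanAlgebra β] [BooleanAlgebra γ]
  {f : BoundedLatticeHom γ α} {g : BoundedLatticeHom γ β} {a : α} {b : β}

theorem exists_le_of_leftHom_le_rightHom (hab : leftHom f g a ≤ rightHom f g b) :
    ∃ c, a ≤ f c ∧ g c ≤ b := by
  by_contra! hno
  obtain ⟨p, q, hp, hq, hpq, hap, hbq⟩ := Ideal.exists_isPrime_comap_eq_comap hno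
  exact hab (a := ⟨p, q, hp, hq, hpq⟩) hap hbq

theorem exists_le_of_rightHom_le_leftHom (hba : rightHom f g b ≤ leftHom f g a) :
    ∃ c, b ≤ g c ∧ f c ≤ a := by
  by_contra! hno
  obtain ⟨q, p, hq, hp, hqp, hbq, hap⟩ := Ideal.exists_isPrime_comap_eq_comap hno
  exact hba (a := ⟨p, q, hp, hq, hqp.symm⟩) hbq hap

end BooleanAlgebra

end PrimePullback

/-- The class of Boolean algebras has the superamalgamation property. -/
theorem boolean_algebra_superamalgamation {A B C : Type u}
    [BooleanAlgebra A] [BooleanAlgebra B] [BooleanAlgebra C]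
    (f : BoundedLatticeHom C A) (g : BoundedLatticeHom C B)
    (hf : Function.Injective f) (hg : Function.Injective g) :
    ∃ (D : Type u) (_ : BooleanAlgebra D)
      (h : BoundedLatticeHom A D) (k : BoundedLatticeHom B D),
      Function.Injective h ∧ Function.Injective k ∧
      (∀ c, h (f c) = k (g c)) ∧
      (∀ a b, h a = k b → ∃ c, a = f c ∧ b = g c) ∧
      (∀ a b, h a ≤ k b → ∃ c, a ≤ f c ∧ g c ≤ b) ∧
      (∀ a b, k b ≤ h a → ∃ c, b ≤ g c ∧ f c ≤ a) := by
  have hle : ∀ a b, PrimePullback.leftHom f g a ≤ PrimePullback.rightHom f g b →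
      ∃ c, a ≤ f c ∧ g c ≤ b :=
    fun _ _ => PrimePullback.exists_le_of_leftHom_le_rightHom
  have hge : ∀ a b, PrimePullback.rightHom f g b ≤ PrimePullback.leftHom f g a →
      ∃ c, b ≤ g c ∧ f c ≤ a :=
    fun _ _ => PrimePullback.exists_le_of_rightHom_le_leftHom
  exact ⟨Set (PrimePullback f g), inferInstance, _, _,
    BoundedLatticeHom.injective_of_superamalgamation hg hle,
    BoundedLatticeHom.injective_of_superamalgamation hf fun b a => hge a b,
    PrimePullback.leftHom_comp_eq f g,
    fun _ _ => exists_eq_of_superamalgamation (orderEmbeddingOfInjective f hf)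
      (orderEmbeddingOfInjective g hg) hle hge, hle, hge⟩
end

section
/- The class of join semilattices has the superamalgamation property: for all join semilattices A, B, C and injective sup-homomorphisms f : C → A, g : C → B, there exist a join semilattice D and injective sup-homomorphisms h : A → D, k : B → D such that h ∘ f = k ∘ g; whenever h(a) = k(b) there is c ∈ C with a = f(c) and b = g(c); whenever h(a) ≤ k(b) there is c ∈ C with a ≤ f(c) and g(c) ≤ b; and whenever k(b) ≤ h(a) there is c ∈ C with b ≤ g(c) and f(c) ≤ a. -/
universe u

/-- The class of join semilattices has the superamalgamation property. -/
theorem join_semilattice_superamalgamation {A B C : Type u}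
    [SemilatticeSup A] [SemilatticeSup B] [SemilatticeSup C]
    (f : SupHom C A) (g : SupHom C B)
    (hf : Function.Injective f) (hg : Function.Injective g) :
    ∃ (D : Type u) (_ : SemilatticeSup D) (h : SupHom A D) (k : SupHom B D),
      Function.Injective h ∧ Function.Injective k ∧
      (∀ c, h (f c) = k (g c)) ∧
      (∀ a b, h a = k b → ∃ c, a = f c ∧ b = g c) ∧
      (∀ a b, h a ≤ k b → ∃ c, a ≤ f c ∧ g c ≤ b) ∧
      (∀ a b, k b ≤ h a → ∃ c, b ≤ g c ∧ f c ≤ a) := by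
  -- injective sup-homs reflect order
  have reflF : ∀ c c' : C, f c ≤ f c' → c ≤ c' := by
    intro c c' hcc
    have : f (c ⊔ c') = f c' := by rw [map_sup]; exact sup_eq_right.2 hcc
    exact sup_eq_right.1 (hf this)
  have reflG : ∀ c c' : C, g c ≤ g c' → c ≤ c' := by
    intro c c' hcc
    have : g (c ⊔ c') = g c' := by rw [map_sup]; exact sup_eq_right.2 hcc
    exact sup_eq_right.1 (hg this)
  refine ⟨(Set A)ᵒᵈ × (Set B)ᵒᵈ, inferInstance, ?_, ?_, ?_, ?_, ?_, ?_, ?_, ?_⟩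
  · exact
      { toFun := fun a =>
          (OrderDual.toDual {x | a ≤ x},
           OrderDual.toDual {y | ∃ c, a ≤ f c ∧ g c ≤ y}),
        map_sup' := by
          intro a₁ a₂
          refine Prod.ext ?_ ?_
          · show OrderDual.toDual {x | a₁ ⊔ a₂ ≤ x} =
              OrderDual.toDual ({x | a₁ ≤ x} ∩ {x | a₂ ≤ x})
            congr 1
            ext x
            simp [sup_le_iff]
          · show OrderDual.toDual {y | ∃ c, a₁ ⊔ a₂ ≤ f c ∧ g c ≤ y} =
              OrderDual.toDual
                ({y | ∃ c, a₁ ≤ f c ∧ g c ≤ y} ∩ {y | ∃ c, a₂ ≤ f c ∧ g c ≤ y})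
            congr 1
            ext y
            constructor
            · rintro ⟨c, hc1, hc2⟩
              exact ⟨⟨c, le_sup_left.trans hc1, hc2⟩, ⟨c, le_sup_right.trans hc1, hc2⟩⟩
            · rintro ⟨⟨c₁, h1, h2⟩, ⟨c₂, h3, h4⟩⟩
              refine ⟨c₁ ⊔ c₂, ?_, ?_⟩
              · rw [map_sup]; exact sup_le_sup h1 h3
              · rw [map_sup]; exact sup_le_iff.2 ⟨h2, h4⟩ }
  · exact
      { toFun := fun b =>
          (OrderDual.toDual {x | ∃ c, b ≤ g c ∧ f c ≤ x},
           OrderDual.toDual {y | b ≤ y}),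
        map_sup' := by
          intro b₁ b₂
          refine Prod.ext ?_ ?_
          · show OrderDual.toDual {x | ∃ c, b₁ ⊔ b₂ ≤ g c ∧ f c ≤ x} =
              OrderDual.toDual
                ({x | ∃ c, b₁ ≤ g c ∧ f c ≤ x} ∩ {x | ∃ c, b₂ ≤ g c ∧ f c ≤ x})
            congr 1
            ext x
            constructor
            · rintro ⟨c, hc1, hc2⟩
              exact ⟨⟨c, le_sup_left.trans hc1, hc2⟩, ⟨c, le_sup_right.trans hc1, hc2⟩⟩
            · rintro ⟨⟨c₁, h1, h2⟩, ⟨c₂, h3, h4⟩⟩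
              refine ⟨c₁ ⊔ c₂, ?_, ?_⟩
              · rw [map_sup]; exact sup_le_sup h1 h3
              · rw [map_sup]; exact sup_le_iff.2 ⟨h2, h4⟩
          · show OrderDual.toDual {y | b₁ ⊔ b₂ ≤ y} =
              OrderDual.toDual ({y | b₁ ≤ y} ∩ {y | b₂ ≤ y})
            congr 1
            ext y
            simp [sup_le_iff] }
  · -- injectivity of h
    intro a₁ a₂ hab
    have h1 : ({x | a₁ ≤ x} : Set A) = {x | a₂ ≤ x} :=
      congrArg OrderDual.ofDual (congrArg Prod.fst hab)
    have h2 : a₂ ∈ ({x | a₁ ≤ x} : Set A) := h1 ▸ (le_refl a₂)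
    have h3 : a₁ ∈ ({x | a₂ ≤ x} : Set A) := h1 ▸ (le_refl a₁) -- fix below
    exact le_antisymm h2 h3
  · -- injectivity of k
    intro b₁ b₂ hab
    have h1 : ({y | b₁ ≤ y} : Set B) = {y | b₂ ≤ y} :=
      congrArg OrderDual.ofDual (congrArg Prod.snd hab)
    have h2 : b₂ ∈ ({y | b₁ ≤ y} : Set B) := h1 ▸ (le_refl b₂)
    have h3 : b₁ ∈ ({y | b₂ ≤ y} : Set B) := h1 ▸ (le_refl b₁)
    exact le_antisymm h2 h3
  · -- commutation
    intro c
    refine Prod.ext ?_ ?_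
    · show OrderDual.toDual {x | f c ≤ x} =
        OrderDual.toDual {x | ∃ c', g c ≤ g c' ∧ f c' ≤ x}
      congr 1
      ext x
      constructor
      · intro hx; exact ⟨c, le_refl _, hx⟩
      · rintro ⟨c', h1, h2⟩
        exact ((OrderHomClass.mono f (reflG _ _ h1)).trans h2 : f c ≤ x)
    · show OrderDual.toDual {y | ∃ c', f c ≤ f c' ∧ g c' ≤ y} =
        OrderDual.toDual {y | g c ≤ y}
      congr 1
      ext y
      constructor
      · rintro ⟨c', h1, h2⟩
        exact ((OrderHomClass.mono g (reflF _ _ h1)).trans h2 : g c ≤ y)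
      · intro hy; exact ⟨c, le_refl _, hy⟩
  · -- strong amalgamation
    intro a b hab
    have hfst : ({x | ∃ c, b ≤ g c ∧ f c ≤ x} : Set A) = {x | a ≤ x} :=
      (congrArg OrderDual.ofDual (congrArg Prod.fst hab)).symm
    have hsnd : ({y | ∃ c, a ≤ f c ∧ g c ≤ y} : Set B) = {y | b ≤ y} :=
      congrArg OrderDual.ofDual (congrArg Prod.snd hab)
    have h1 : b ∈ ({y | ∃ c, a ≤ f c ∧ g c ≤ y} : Set B) := hsnd ▸ (le_refl b)
    have h2 : a ∈ ({x | ∃ c, b ≤ g c ∧ f c ≤ x} : Set A) := hfst ▸ (le_refl a)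
    obtain ⟨c₁, hc1, hc2⟩ := h1
    obtain ⟨c₂, hc3, hc4⟩ := h2
    have e1 : c₂ ≤ c₁ := reflF _ _ (hc4.trans hc1)
    have e2 : c₁ ≤ c₂ := reflG _ _ (hc2.trans hc3)
    have : c₁ = c₂ := le_antisymm e2 e1
    subst this
    exact ⟨c₁, le_antisymm hc1 hc4, le_antisymm hc3 hc2⟩
  · -- h a ≤ k b
    intro a b hab
    have h2 : ({y | b ≤ y} : Set B) ⊆ {y | ∃ c, a ≤ f c ∧ g c ≤ y} := hab.2
    exact h2 (le_refl b)
  · -- k b ≤ h a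
    intro a b hab
    have h2 : ({x | a ≤ x} : Set A) ⊆ {x | ∃ c, b ≤ g c ∧ f c ≤ x} := hab.1
    exact h2 (le_refl a)
end

section
/- Let X be a set, D ⊆ X, and G : D → X a function. Then G can be extended to an involution K : X → X (a total function with K(K(x)) = x for all x ∈ X, and K(d) = G(d) for all d ∈ D) if and only if G is injective and for every a ∈ D with G(a) ∈ D one has G(G(a)) = a. -/
/-- Extension to an involution: a partial function `G : D → X` extends to an
involution `K : X → X` iff `G` is injective and `G (G a) = a` whenever `G a ∈ D`. -/
theorem extend_to_involution_iff {X : Type*} (D : Set X) (G : D → X) :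
    (∃ K : X → X, (∀ x, K (K x) = x) ∧ ∀ d : D, K d = G d) ↔
      (Function.Injective G ∧ ∀ (a : D) (h : G a ∈ D), G ⟨G a, h⟩ = a) := by
  constructor
  · rintro ⟨K, hK, hext⟩
    constructor
    · intro a b hab
      have h1 : K (G a) = K (G b) := by rw [hab]
      rwa [← hext a, ← hext b, hK, hK, Subtype.val_inj] at h1
    · intro a h
      have h1 := hext ⟨G a, h⟩
      have h2 := hext a
      calc (G ⟨G a, h⟩ : X) = K (G a) := h1.symm
        _ = K (K a) := by rw [h2]
        _ = a := hK a
  · rintro ⟨hinj, hG⟩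
    classical
    refine ⟨fun x => if h : x ∈ D then G ⟨x, h⟩ else
        if h2 : ∃ a : D, G a = x then (h2.choose : X) else x, ?_, ?_⟩
    · intro x
      beta_reduce
      by_cases hx : x ∈ D
      · rw [dif_pos hx]
        by_cases hGx : (G ⟨x, hx⟩ : X) ∈ D
        · rw [dif_pos hGx]
          exact hG ⟨x, hx⟩ hGx
        · rw [dif_neg hGx]
          have h2 : ∃ a : D, G a = G ⟨x, hx⟩ := ⟨⟨x, hx⟩, rfl⟩
          rw [dif_pos h2]
          have hs := hinj h2.choose_spec
          rw [hs]
      · rw [dif_neg hx]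
        by_cases h2 : ∃ a : D, G a = x
        · rw [dif_pos h2]
          have hc : (h2.choose : X) ∈ D := h2.choose.2
          rw [dif_pos hc]
          have : (⟨(h2.choose : X), hc⟩ : D) = h2.choose := rfl
          rw [this]
          exact h2.choose_spec
        · rw [dif_neg h2, dif_neg hx, dif_neg h2]
    · intro d
      simp only [dif_pos d.2]
end

section
/- Let P be a complete lattice, D ⊆ P, and G : D → P a function. Then G can be extended to an isotone and idempotent operation K : P → P (with K(d) = G(d) for all d ∈ D) if and only if G satisfies the following three conditions for all a, b ∈ D: (i) a ≤ b implies G(a) ≤ G(b); (ii) a ≤ G(b) implies G(a) ≤ G(b); (iii) G(a) ≤ b implies G(a) ≤ G(b). -/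
/-- Extension to an isotone idempotent operation on a complete lattice. -/
theorem extend_to_isotone_idempotent_iff {P : Type*} [CompleteLattice P]
    (D : Set P) (G : D → P) :
    (∃ K : P → P, Monotone K ∧ (∀ x, K (K x) = K x) ∧ ∀ d : D, K d = G d) ↔
      ((∀ a b : D, (a : P) ≤ (b : P) → G a ≤ G b) ∧
       (∀ a b : D, (a : P) ≤ G b → G a ≤ G b) ∧
       (∀ a b : D, G a ≤ (b : P) → G a ≤ G b)) := by
  constructor
  · rintro ⟨K, hmono, hidem, hext⟩
    refine ⟨fun a b hab => ?_, fun a b hab => ?_, fun a b hab => ?_⟩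
    · rw [← hext a, ← hext b]; exact hmono hab
    · rw [← hext a, ← hext b]
      calc K a ≤ K (K b) := by rw [hext b]; exact hmono hab
        _ = K b := hidem b
    · rw [← hext a, ← hext b]
      calc K a = K (K a) := (hidem a).symm
        _ ≤ K b := by rw [hext a]; exact hmono hab
  · rintro ⟨h1, h2, h3⟩
    set S : P → Set P := fun x =>
      {y | (∀ a : D, (a : P) ≤ y → G a ≤ y) ∧ (∀ a : D, (a : P) ≤ x → G a ≤ y) ∧
        (∀ a : D, G a ≤ x → G a ≤ y)} with hS
    set K : P → P := fun x => sInf (S x) with hK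
    -- K x itself satisfies the T-condition
    have hT : ∀ x, ∀ a : D, (a : P) ≤ K x → G a ≤ K x := by
      intro x a ha
      refine le_sInf fun y hy => hy.1 a (ha.trans (sInf_le hy))
    have hM : ∀ x, ∀ a : D, (a : P) ≤ x → G a ≤ K x := by
      intro x a ha
      exact le_sInf fun y hy => hy.2.1 a ha
    have hL : ∀ x, ∀ a : D, G a ≤ x → G a ≤ K x := by
      intro x a ha
      exact le_sInf fun y hy => hy.2.2 a ha
    refine ⟨K, ?_, ?_, ?_⟩
    · intro x x' hxx'
      refine sInf_le_sInf fun y hy => ?_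
      exact ⟨hy.1, fun a ha => hy.2.1 a (ha.trans hxx'), fun a ha => hy.2.2 a (ha.trans hxx')⟩
    · intro x
      apply le_antisymm
      · exact sInf_le ⟨hT x, fun a ha => hT x a ha, fun a ha => ha⟩
      · refine sInf_le (⟨hT (K x), fun a ha => hL (K x) a (hM x a ha),
          fun a ha => hL (K x) a (hL x a ha)⟩)
    · intro d
      apply le_antisymm
      · exact sInf_le ⟨fun a ha => h2 a d ha, fun a ha => h1 a d ha, fun a ha => h3 a d ha⟩
      · exact hM d d le_rfl
end

section
/- Let P be a complete lattice, D ⊆ P, and G : D → P a function. Then G can be extended to a closure operation K : P → P (with K(d) = G(d) for all d ∈ D) if and only if G is extensive (a ≤ G(a) for all a ∈ D) and satisfies: for all a, b ∈ D, a ≤ G(b) implies G(a) ≤ G(b). -/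
/-- Extension to a closure operation on a complete lattice. -/
theorem extend_to_closure_iff {P : Type*} [CompleteLattice P]
    (D : Set P) (G : D → P) :
    (∃ K : P → P, (∀ x, x ≤ K x) ∧ Monotone K ∧ (∀ x, K (K x) = K x) ∧
        ∀ d : D, K d = G d) ↔
      ((∀ a : D, (a : P) ≤ G a) ∧
       (∀ a b : D, (a : P) ≤ G b → G a ≤ G b)) := by
  constructor
  · rintro ⟨K, hext, hmono, hidem, hD⟩
    refine ⟨fun a => (hD a) ▸ hext a, fun a b hab => ?_⟩
    calc G a = K a := (hD a).symm
      _ ≤ K (G b) := hmono hab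
      _ = K (K b) := by rw [hD b]
      _ = K b := hidem b
      _ = G b := hD b
  · rintro ⟨h1, h2⟩
    set K : P → P := fun x => ⨅ (d : D) (_ : x ≤ G d), G d with hK
    have hle : ∀ x, x ≤ K x := fun x => le_iInf fun d => le_iInf fun h => h
    have hmono : Monotone K := fun x y hxy =>
      le_iInf fun d => le_iInf fun h => iInf_le_of_le d (iInf_le _ (hxy.trans h))
    have hKle : ∀ x (d : D), x ≤ G d → K x ≤ G d := fun x d h =>
      iInf_le_of_le d (iInf_le _ h)
    refine ⟨K, hle, hmono, fun x => le_antisymm ?_ (hle _), fun d => ?_⟩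
    · exact le_iInf fun d => le_iInf fun h => hKle (K x) d (hKle x d h)
    · exact le_antisymm (hKle d d (h1 d)) (le_iInf fun e => le_iInf fun h => h2 d e h)
end

section
/- Let P be a complete lattice, n ≥ 1, and i, j natural numbers with i + j ≤ n. Let X ⊆ P^n and V : X → P a function. Then V can be extended to an n-ary operation F : P^n → P (with F(ā) = V(ā) for all ā ∈ X) that is isotone in each of the first i coordinates and antitone in each of the last j coordinates if and only if for all n-tuples ā = (a₁,…,aₙ), b̄ = (b₁,…,bₙ) ∈ X, the conditions a_h ≤ b_h for every h ≤ i, a_h = b_h for every h with i < h ≤ n − j, and a_h ≥ b_h for every h > n − j, together imply V(ā) ≤ V(b̄). -/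
/-- Extension to an `n`-ary operation isotone on the first `i` coordinates and
antitone on the last `j` coordinates (coordinates are `0`-indexed: the first `i`
coordinates are those `h` with `h.val < i`, the last `j` are those with
`n - j ≤ h.val`). -/
theorem extend_to_mixed_monotone_iff {P : Type*} [CompleteLattice P]
    (n : ℕ) (hn : 1 ≤ n) (i j : ℕ) (hij : i + j ≤ n)
    (X : Set (Fin n → P)) (V : X → P) :
    (∃ F : (Fin n → P) → P,
        (∀ a : X, F a = V a) ∧
        (∀ h : Fin n, h.val < i → ∀ (a : Fin n → P) (x y : P), x ≤ y →
          F (Function.update a h x) ≤ F (Function.update a h y)) ∧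
        (∀ h : Fin n, n - j ≤ h.val → ∀ (a : Fin n → P) (x y : P), x ≤ y →
          F (Function.update a h y) ≤ F (Function.update a h x))) ↔
      (∀ a b : X,
        (∀ h : Fin n, h.val < i → (a : Fin n → P) h ≤ (b : Fin n → P) h) →
        (∀ h : Fin n, i ≤ h.val → h.val < n - j →
          (a : Fin n → P) h = (b : Fin n → P) h) →
        (∀ h : Fin n, n - j ≤ h.val → (b : Fin n → P) h ≤ (a : Fin n → P) h) →
        V a ≤ V b) := by
  classical
  have hinj : i ≤ n - j := by omega
  constructor
  · rintro ⟨F, hext, hiso, hanti⟩ a b h1 h2 h3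
    have key : ∀ k : ℕ, k ≤ n →
        F (a : Fin n → P) ≤
          F (fun h : Fin n => if h.val < k then (b : Fin n → P) h else (a : Fin n → P) h) := by
      intro k
      induction k with
      | zero => intro _; simp
      | succ k ih =>
        intro hk
        have hkn : k < n := hk
        refine le_trans (ih (le_of_lt hkn)) ?_
        set c : Fin n → P :=
          fun h : Fin n => if h.val < k then (b : Fin n → P) h else (a : Fin n → P) h with hc
        have hck : c ⟨k, hkn⟩ = (a : Fin n → P) ⟨k, hkn⟩ := by simp [hc]
        have hcupd : c = Function.update c ⟨k, hkn⟩ ((a : Fin n → P) ⟨k, hkn⟩) := by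
          rw [← hck, Function.update_eq_self]
        have hnext : (fun h : Fin n => if h.val < k + 1 then (b : Fin n → P) h else (a : Fin n → P) h)
            = Function.update c ⟨k, hkn⟩ ((b : Fin n → P) ⟨k, hkn⟩) := by
          funext h
          rcases eq_or_ne h ⟨k, hkn⟩ with rfl | hne
          · simp
          · have hv : h.val ≠ k := fun hv => hne (Fin.ext hv)
            rw [Function.update_of_ne hne, hc]
            simp only []
            by_cases hlt : h.val < k
            · rw [if_pos hlt, if_pos (by omega)]
            · rw [if_neg hlt, if_neg (by omega)]
        rw [hnext]
        rcases lt_or_ge k i with hki | hki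
        · conv_lhs => rw [hcupd]
          exact hiso ⟨k, hkn⟩ hki c _ _ (h1 ⟨k, hkn⟩ hki)
        · rcases lt_or_ge k (n - j) with hkj | hkj
          · have := h2 ⟨k, hkn⟩ hki hkj
            rw [← this, ← hck, Function.update_eq_self]
          · conv_lhs => rw [hcupd]
            exact hanti ⟨k, hkn⟩ hkj c _ _ (h3 ⟨k, hkn⟩ hkj)
    have := key n le_rfl
    have hb : (fun h : Fin n => if h.val < n then (b : Fin n → P) h else (a : Fin n → P) h)
        = (b : Fin n → P) := by
      funext h; rw [if_pos h.isLt]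
    rw [hb, hext a, hext b] at this
    exact this
  · intro H
    set R : (Fin n → P) → (Fin n → P) → Prop := fun u c =>
      (∀ h : Fin n, h.val < i → u h ≤ c h) ∧
      (∀ h : Fin n, i ≤ h.val → h.val < n - j → u h = c h) ∧
      (∀ h : Fin n, n - j ≤ h.val → c h ≤ u h) with hR
    refine ⟨fun c => ⨆ a : {a : X // R (a : Fin n → P) c}, V a.1, ?_, ?_, ?_⟩
    · intro a
      apply le_antisymm
      · exact iSup_le fun ⟨a', hR'⟩ => H a' a hR'.1 hR'.2.1 hR'.2.2
      · exact le_iSup_of_le ⟨a, fun h _ => le_rfl, fun h _ _ => rfl, fun h _ => le_rfl⟩ le_rfl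
    · intro h hh a x y hxy
      refine iSup_le fun ⟨a', hR'⟩ => le_iSup_of_le ⟨a', ?_, ?_, ?_⟩ le_rfl
      · intro g hg
        rcases eq_or_ne g h with rfl | hne
        · rw [Function.update_self]
          calc (a' : Fin n → P) g ≤ x := by
                have := hR'.1 g hg; rwa [Function.update_self] at this
            _ ≤ y := hxy
        · rw [Function.update_of_ne hne]
          have := hR'.1 g hg; rwa [Function.update_of_ne hne] at this
      · intro g hg1 hg2
        have hne : g ≠ h := by intro e; subst e; omega
        rw [Function.update_of_ne hne]
        have := hR'.2.1 g hg1 hg2; rwa [Function.update_of_ne hne] at this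
      · intro g hg
        have hne : g ≠ h := by intro e; subst e; omega
        rw [Function.update_of_ne hne]
        have := hR'.2.2 g hg; rwa [Function.update_of_ne hne] at this
    · intro h hh a x y hxy
      refine iSup_le fun ⟨a', hR'⟩ => le_iSup_of_le ⟨a', ?_, ?_, ?_⟩ le_rfl
      · intro g hg
        have hne : g ≠ h := by intro e; subst e; omega
        rw [Function.update_of_ne hne]
        have := hR'.1 g hg; rwa [Function.update_of_ne hne] at this
      · intro g hg1 hg2
        have hne : g ≠ h := by intro e; subst e; omega
        rw [Function.update_of_ne hne]
        have := hR'.2.1 g hg1 hg2; rwa [Function.update_of_ne hne] at this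
      · intro g hg
        rcases eq_or_ne g h with rfl | hne
        · rw [Function.update_self]
          calc x ≤ y := hxy
            _ ≤ (a' : Fin n → P) g := by
                have := hR'.2.2 g hg; rwa [Function.update_self] at this
        · rw [Function.update_of_ne hne]
          have := hR'.2.2 g hg; rwa [Function.update_of_ne hne] at this
end

section
/- Let P be a complete lattice, D ⊆ P, and G : D → P a function which is extensive (a ≤ G(a) for all a ∈ D) and satisfies: for all a, b ∈ D, a ≤ G(b) implies G(a) ≤ G(b). Define K : P → P by K(x) = ⨅ { G(b) : b ∈ D, x ≤ G(b) }. Then K is a closure operation extending G, and K is the largest closure operation extending G: every closure operation K' on P with K'(d) = G(d) for all d ∈ D satisfies K'(x) ≤ K(x) for every x ∈ P. -/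
/-- The operation `K x = ⨅ { G b : b ∈ D, x ≤ G b }` is the largest closure
operation extending `G`, provided `G` is extensive and satisfies
`a ≤ G b → G a ≤ G b`. -/
theorem largest_closure_extension {P : Type*} [CompleteLattice P]
    (D : Set P) (G : D → P)
    (hext : ∀ a : D, (a : P) ≤ G a)
    (hiso : ∀ a b : D, (a : P) ≤ G b → G a ≤ G b)
    (K : P → P) (hK : ∀ x, K x = sInf {y | ∃ b : D, G b = y ∧ x ≤ G b}) :
    (∀ x, x ≤ K x) ∧ Monotone K ∧ (∀ x, K (K x) = K x) ∧
    (∀ d : D, K d = G d) ∧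
    ∀ K' : P → P, (∀ x, x ≤ K' x) → Monotone K' → (∀ x, K' (K' x) = K' x) →
      (∀ d : D, K' d = G d) → ∀ x, K' x ≤ K x := by
  have hKle : ∀ x (b : D), x ≤ G b → K x ≤ G b := by
    intro x b hb
    rw [hK]
    exact sInf_le ⟨b, rfl, hb⟩
  have hle : ∀ x y, (∀ b : D, x ≤ G b → y ≤ G b) → y ≤ K x := by
    intro x y h
    rw [hK]
    exact le_sInf (by rintro z ⟨b, rfl, hb⟩; exact h b hb)
  have hextK : ∀ x, x ≤ K x := fun x => hle x x (fun _ h => h)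
  have hmono : Monotone K := by
    intro a b hab
    exact hle b (K a) (fun c hc => hKle a c (hab.trans hc))
  refine ⟨hextK, hmono, ?_, ?_, ?_⟩
  · intro x
    refine le_antisymm (hle x (K (K x)) ?_) (hextK _)
    intro b hb
    exact hKle _ b (hKle x b hb)
  · intro d
    refine le_antisymm (hKle d d (hext d)) (hle d (G d) ?_)
    intro b hb
    exact hiso d b hb
  · intro K' hext' hmono' hid' hagr x
    refine hle x (K' x) ?_
    intro b hb
    calc K' x ≤ K' (G b) := hmono' hb
      _ = K' (K' b) := by rw [hagr b]
      _ = K' b := hid' b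
      _ = G b := hagr b
end

section
/- Let P be a complete lattice, D ⊆ P, and let G₁ : D → P and G₂ : D → P both be extensive (a ≤ Gᵢ(a) for all a ∈ D) and both satisfy: for all a, b ∈ D, a ≤ Gᵢ(b) implies Gᵢ(a) ≤ Gᵢ(b). If G₁(b) ≤ G₂(b) for every b ∈ D, then there exist closure operations K₁ and K₂ on P extending G₁ and G₂ respectively, such that K₁(x) ≤ K₂(x) for every x ∈ P. -/
section aux
variable {P : Type*} [CompleteLattice P] {D : Set P}

/-- canonical closure extension -/
noncomputable def closExt (G : D → P) (x : P) : P :=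
  ⨅ d : {d : D // x ≤ G d}, G d.1

lemma closExt_le {G : D → P} {x : P} {d : D} (h : x ≤ G d) : closExt G x ≤ G d :=
  iInf_le _ (⟨d, h⟩ : {d : D // x ≤ G d})

lemma le_closExt (G : D → P) (x : P) : x ≤ closExt G x :=
  le_iInf fun d => d.2

lemma closExt_mono (G : D → P) : Monotone (closExt G) := fun _x _y hxy =>
  le_iInf fun d => closExt_le (hxy.trans d.2)

lemma closExt_idem (G : D → P) (x : P) : closExt G (closExt G x) = closExt G x :=
  le_antisymm (le_iInf fun d => closExt_le (closExt_le d.2)) (le_closExt _ _)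

lemma closExt_extends {G : D → P} (hext : ∀ a : D, (a : P) ≤ G a)
    (hiso : ∀ a b : D, (a : P) ≤ G b → G a ≤ G b) (d : D) :
    closExt G (d : P) = G d :=
  le_antisymm (closExt_le (hext d)) (le_iInf fun e => hiso d e.1 e.2)

end aux

/-- Two comparable partial functions satisfying the closure-extension conditions
extend to comparable closure operations. -/
theorem comparable_closure_extensions {P : Type*} [CompleteLattice P]
    (D : Set P) (G₁ G₂ : D → P)
    (hext₁ : ∀ a : D, (a : P) ≤ G₁ a)
    (hiso₁ : ∀ a b : D, (a : P) ≤ G₁ b → G₁ a ≤ G₁ b)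
    (hext₂ : ∀ a : D, (a : P) ≤ G₂ a)
    (hiso₂ : ∀ a b : D, (a : P) ≤ G₂ b → G₂ a ≤ G₂ b)
    (hcomp : ∀ b : D, G₁ b ≤ G₂ b) :
    ∃ K₁ K₂ : P → P,
      (∀ x, x ≤ K₁ x) ∧ Monotone K₁ ∧ (∀ x, K₁ (K₁ x) = K₁ x) ∧
      (∀ d : D, K₁ d = G₁ d) ∧
      (∀ x, x ≤ K₂ x) ∧ Monotone K₂ ∧ (∀ x, K₂ (K₂ x) = K₂ x) ∧
      (∀ d : D, K₂ d = G₂ d) ∧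
      (∀ x, K₁ x ≤ K₂ x) := by
  set K₂ : P → P := closExt G₂ with hK₂
  set K₁ : P → P := fun x => closExt G₁ x ⊓ K₂ x with hK₁
  have hK₂ext : ∀ x, x ≤ K₂ x := le_closExt G₂
  have hK₂mono : Monotone K₂ := closExt_mono G₂
  have hK₂idem : ∀ x, K₂ (K₂ x) = K₂ x := closExt_idem G₂
  have hK₁ext : ∀ x, x ≤ K₁ x := fun x => le_inf (le_closExt G₁ x) (hK₂ext x)
  have hK₁mono : Monotone K₁ := fun x y h =>
    inf_le_inf (closExt_mono G₁ h) (hK₂mono h)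
  have hle : ∀ x, K₁ x ≤ K₂ x := fun x => inf_le_right
  refine ⟨K₁, K₂, hK₁ext, hK₁mono, ?_, ?_, hK₂ext, hK₂mono, hK₂idem,
    fun d => closExt_extends hext₂ hiso₂ d, hle⟩
  · intro x
    refine le_antisymm (le_inf ?_ ?_) (hK₁ext _)
    · exact (inf_le_left : K₁ (K₁ x) ≤ closExt G₁ (K₁ x)).trans
        (le_iInf fun d => closExt_le (inf_le_left.trans (closExt_le d.2)))
    · exact (hle (K₁ x)).trans ((hK₂mono (hle x)).trans (hK₂idem x).le)
  · intro d
    show closExt G₁ (d : P) ⊓ closExt G₂ (d : P) = G₁ d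
    rw [closExt_extends hext₁ hiso₁ d, closExt_extends hext₂ hiso₂ d]
    exact inf_eq_left.mpr (hcomp d)
end

section
/- Let Q be a poset equipped with a closure operation c, let P be a complete lattice, and let ι : Q → P be an order embedding. Then there exists a closure operation K on P such that K(ι(q)) = ι(c(q)) for every q ∈ Q. -/
/-- A closure operation transfers along an order embedding into a complete
lattice. -/
theorem closure_extends_along_orderEmbedding {Q P : Type*}
    [PartialOrder Q] [CompleteLattice P]
    (c : Q → Q) (hext : ∀ q, q ≤ c q) (hmono : Monotone c)
    (hidem : ∀ q, c (c q) = c q) (ι : Q ↪o P) :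
    ∃ K : P → P, (∀ x, x ≤ K x) ∧ Monotone K ∧ (∀ x, K (K x) = K x) ∧
      ∀ q, K (ι q) = ι (c q) := by
  set K : P → P := fun x => sInf {y | (∃ q, y = ι (c q)) ∧ x ≤ y} with hK
  have hKext : ∀ x, x ≤ K x := fun x => le_sInf fun y hy => hy.2
  have hKmono : Monotone K := by
    intro a b hab
    exact sInf_le_sInf fun y hy => ⟨hy.1, hab.trans hy.2⟩
  have hKle : ∀ x y, (∃ q, y = ι (c q)) → x ≤ y → K x ≤ y :=
    fun x y h1 h2 => sInf_le ⟨h1, h2⟩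
  refine ⟨K, hKext, hKmono, ?_, ?_⟩
  · intro x
    refine le_antisymm ?_ (hKext _)
    apply sInf_le_sInf
    intro y hy
    exact ⟨hy.1, hKle x y hy.1 hy.2⟩
  · intro q
    refine le_antisymm (hKle _ _ ⟨q, rfl⟩ (ι.monotone (hext q))) ?_
    refine le_sInf fun y hy => ?_
    obtain ⟨⟨q', rfl⟩, hle⟩ := hy
    have : q ≤ c q' := ι.le_iff_le.mp hle
    calc ι (c q) ≤ ι (c (c q')) := ι.monotone (hmono this)
      _ = ι (c q') := by rw [hidem]
end

section
/- Every poset Q equipped with a closure operation c can be order-embedded into a complete lattice with a closure operation, preserving the operation and all existing (possibly infinitary) meets and joins: there exist a complete lattice L, an order embedding ι : Q → L, and a closure operation K on L such that K(ι(q)) = ι(c(q)) for all q ∈ Q; for every S ⊆ Q and q ∈ Q, if q is the least upper bound of S in Q then ι(q) is the least upper bound of ι(S) in L; and if q is the greatest lower bound of S in Q then ι(q) is the greatest lower bound of ι(S) in L. -/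
universe u

/-!
Embed `Q` into its Dedekind–MacNeille completion by `q ↦ (Iic q, Ici q)`. Principal cuts
preserve every existing supremum and infimum, and a closure operator `c` on `Q` extends to the
cuts by sending a cut `A` to the cut generated by `c` applied to its upper set,
i.e. `⨅ b ∈ A.right, principal (c b)`.
-/

namespace DedekindCut

variable {α : Type*} [Preorder α]

theorem isLUB_principal_image {S : Set α} {q : α} (h : IsLUB S q) :
    IsLUB (principal '' S) (principal q) := by
  refine ⟨Set.forall_mem_image.2 fun s hs => principal_le_principal.2 (h.1 hs), fun B hB => ?_⟩
  rw [principal_le_iff, ← lowerBounds_right]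
  exact fun y hy => h.2 fun s hs =>
    Concept.rel_extent_intent (principal_le_iff.1 (hB ⟨s, hs, rfl⟩)) hy

theorem isGLB_principal_image {S : Set α} {q : α} (h : IsGLB S q) :
    IsGLB (principal '' S) (principal q) := by
  refine ⟨Set.forall_mem_image.2 fun s hs => principal_le_principal.2 (h.1 hs), fun B hB => ?_⟩
  rw [le_principal_iff, ← upperBounds_left]
  exact fun x hx => h.2 fun s hs =>
    Concept.rel_extent_intent hx (le_principal_iff.1 (hB ⟨s, hs, rfl⟩))

end DedekindCut

namespace ClosureOperator

open DedekindCut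

variable {α : Type*} [Preorder α]

def dedekindCut (c : ClosureOperator α) : ClosureOperator (DedekindCut α) :=
  .mk' (fun A => ⨅ b ∈ A.right, principal (c b))
    (fun _ _ hAB => biInf_mono fun _ hb => Concept.intent_subset_intent_iff.2 hAB hb)
    (fun _ => le_iInf₂ fun b hb =>
      (le_principal_iff.2 hb).trans (principal_le_principal.2 (c.le_closure b)))
    (fun _ => le_iInf₂ fun b hb =>
      (iInf₂_le (c b) (le_principal_iff.1 (iInf₂_le b hb))).trans
        (principal_le_principal.2 (c.idempotent b).le))

theorem dedekindCut_apply (c : ClosureOperator α) (A : DedekindCut α) :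
    c.dedekindCut A = ⨅ b ∈ A.right, principal (c b) :=
  rfl

theorem dedekindCut_principal (c : ClosureOperator α) (a : α) :
    c.dedekindCut (principal a) = principal (c a) := by
  rw [dedekindCut_apply]
  exact le_antisymm (iInf₂_le a Set.self_mem_Ici)
    (le_iInf₂ fun _ hb => principal_le_principal.2 (c.monotone hb))

end ClosureOperator

/-- Every poset with a closure operation embeds into a complete lattice with a
closure operation, preserving the operation and all existing meets and joins. -/
theorem poset_with_closure_embeds_into_complete_lattice {Q : Type u}
    [PartialOrder Q] (c : Q → Q)
    (hext : ∀ q, q ≤ c q) (hmono : Monotone c) (hidem : ∀ q, c (c q) = c q) :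
    ∃ (L : Type u) (_ : CompleteLattice L) (ι : Q ↪o L) (K : L → L),
      (∀ x, x ≤ K x) ∧ Monotone K ∧ (∀ x, K (K x) = K x) ∧
      (∀ q, K (ι q) = ι (c q)) ∧
      (∀ (S : Set Q) (q : Q), IsLUB S q → IsLUB (ι '' S) (ι q)) ∧
      (∀ (S : Set Q) (q : Q), IsGLB S q → IsGLB (ι '' S) (ι q)) := by
  let cl : ClosureOperator Q := .mk' c hmono hext fun q => (hidem q).le
  exact ⟨DedekindCut Q, inferInstance, DedekindCut.principalEmbedding, cl.dedekindCut,
    cl.dedekindCut.le_closure, cl.dedekindCut.monotone, cl.dedekindCut.idempotent,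
    cl.dedekindCut_principal, fun _ _ => DedekindCut.isLUB_principal_image,
    fun _ _ => DedekindCut.isGLB_principal_image⟩
end

section
/- The class of Boolean algebras equipped with a closure operation has the superamalgamation property, in particular the strong amalgamation property: for all Boolean algebras A, B, C with closure operations c_A, c_B, c_C, and injective Boolean algebra homomorphisms f : C → A, g : C → B with f(c_C(x)) = c_A(f(x)) and g(c_C(x)) = c_B(g(x)) for all x ∈ C, there exist a Boolean algebra D with a closure operation c_D and injective Boolean algebra homomorphisms h : A → D, k : B → D with h(c_A(a)) = c_D(h(a)) and k(c_B(b)) = c_D(k(b)), such that h ∘ f = k ∘ g; whenever h(a) = k(b) there is c ∈ C with a = f(c) and b = g(c); whenever h(a) ≤ k(b) there is c ∈ C with a ≤ f(c) and g(c) ≤ b; and whenever k(b) ≤ h(a) there is c ∈ C with b ≤ g(c) and f(c) ≤ a. -/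
universe u

open Order

namespace SuperAmalgAux

attribute [local instance] BoundedLatticeHomClass.toBiheytingHomClass

/-- Build an `Order.Ideal` from a set closed under `⊥`, `⊔`, and lowering. -/
def mkIdeal {P : Type u} [SemilatticeSup P] [OrderBot P] (S : Set P)
    (hlow : ∀ {x y : P}, y ≤ x → x ∈ S → y ∈ S) (hbot : ⊥ ∈ S)
    (hsup : ∀ {x y : P}, x ∈ S → y ∈ S → x ⊔ y ∈ S) : Ideal P :=
  ⟨⟨S, fun _ _ h hx => hlow h hx⟩, ⟨⊥, hbot⟩,
    fun x hx y hy => ⟨x ⊔ y, hsup hx hy, le_sup_left, le_sup_right⟩⟩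

@[simp] lemma mem_mkIdeal {P : Type u} [SemilatticeSup P] [OrderBot P] {S : Set P}
    {hlow : ∀ {x y : P}, y ≤ x → x ∈ S → y ∈ S} {hbot : ⊥ ∈ S}
    {hsup : ∀ {x y : P}, x ∈ S → y ∈ S → x ⊔ y ∈ S} {x : P} :
    x ∈ mkIdeal S hlow hbot hsup ↔ x ∈ S := Iff.rfl

@[simp] lemma coe_mkIdeal {P : Type u} [SemilatticeSup P] [OrderBot P] {S : Set P}
    {hlow : ∀ {x y : P}, y ≤ x → x ∈ S → y ∈ S} {hbot : ⊥ ∈ S}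
    {hsup : ∀ {x y : P}, x ∈ S → y ∈ S → x ⊔ y ∈ S} :
    ((mkIdeal S hlow hbot hsup : Ideal P) : Set P) = S := rfl

/-- Build an `Order.PFilter` from a set closed under `⊤`, `⊓`, and raising. -/
def mkPFilter {P : Type u} [SemilatticeInf P] [OrderTop P] (S : Set P)
    (hup : ∀ {x y : P}, x ≤ y → x ∈ S → y ∈ S) (htop : ⊤ ∈ S)
    (hinf : ∀ {x y : P}, x ∈ S → y ∈ S → x ⊓ y ∈ S) : PFilter P :=
  (IsPFilter.of_def ⟨⊤, htop⟩
    (fun x hx y hy => ⟨x ⊓ y, hinf hx hy, inf_le_left, inf_le_right⟩)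
    (fun h hx => hup h hx)).toPFilter

@[simp] lemma mem_mkPFilter {P : Type u} [SemilatticeInf P] [OrderTop P] {S : Set P}
    {hup : ∀ {x y : P}, x ≤ y → x ∈ S → y ∈ S} {htop : ⊤ ∈ S}
    {hinf : ∀ {x y : P}, x ∈ S → y ∈ S → x ⊓ y ∈ S} {x : P} :
    x ∈ mkPFilter S hup htop hinf ↔ x ∈ S := Iff.rfl

@[simp] lemma coe_mkPFilter {P : Type u} [SemilatticeInf P] [OrderTop P] {S : Set P}
    {hup : ∀ {x y : P}, x ≤ y → x ∈ S → y ∈ S} {htop : ⊤ ∈ S}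
    {hinf : ∀ {x y : P}, x ∈ S → y ∈ S → x ⊓ y ∈ S} :
    ((mkPFilter S hup htop hinf : PFilter P) : Set P) = S := rfl

variable {A B C : Type u} [BooleanAlgebra A] [BooleanAlgebra B] [BooleanAlgebra C]

/-- The key separation lemma: if no element of `C` separates `a` from `b`, then there is a
matching pair of prime ideals with `a` outside the first and `b` inside the second. -/
theorem aux (f : BoundedLatticeHom C A) (g : BoundedLatticeHom C B) {a : A} {b : B}
    (hab : ∀ c : C, a ≤ f c → ¬ g c ≤ b) :
    ∃ (p : Ideal A) (q : Ideal B), p.IsPrime ∧ q.IsPrime ∧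
      (∀ c, f c ∈ p ↔ g c ∈ q) ∧ a ∉ p ∧ b ∈ q := by
  -- the filter and ideal on C
  set Fc : PFilter C := mkPFilter {c | a ≤ f c}
    (fun hxy hx => le_trans hx (OrderHomClass.mono f hxy))
    (by simp [Set.mem_setOf_eq, map_top])
    (fun hx hy => by simpa [map_inf] using le_inf hx hy) with hFc
  set Ic : Ideal C := mkIdeal {c | g c ≤ b}
    (fun hxy hx => le_trans (OrderHomClass.mono g hxy) hx)
    (by simp [Set.mem_setOf_eq, map_bot])
    (fun hx hy => by simpa [map_sup] using sup_le hx hy) with hIc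
  have hdisj : Disjoint (Fc : Set C) (Ic : Set C) := by
    rw [Set.disjoint_left]
    intro c hcF hcI
    exact hab c hcF hcI
  obtain ⟨u, hu_prime, hIu, hFu⟩ :=
    DistribLattice.prime_ideal_of_disjoint_filter_ideal hdisj
  have hFu' : ∀ c : C, a ≤ f c → c ∉ u := fun c hc =>
    Set.disjoint_left.mp hFu (by simpa [hFc] using hc)
  have hIu' : ∀ c : C, g c ≤ b → c ∈ u := fun c hc => hIu (by simpa [hIc] using hc)
  have htopu : (⊤ : C) ∉ u := hFu' ⊤ (by simp [map_top])
  -- the filter and ideal on A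
  set FA : PFilter A := mkPFilter {x | ∃ c, c ∉ u ∧ a ⊓ f c ≤ x}
    (fun hxy hx => by obtain ⟨c, hc, hle⟩ := hx; exact ⟨c, hc, hle.trans hxy⟩)
    (⟨⊤, htopu, le_top⟩)
    (fun hx hy => by
      obtain ⟨c1, hc1, hle1⟩ := hx
      obtain ⟨c2, hc2, hle2⟩ := hy
      refine ⟨c1 ⊓ c2, fun hmem => ?_, ?_⟩
      · rcases hu_prime.mem_or_mem hmem with h | h
        exacts [hc1 h, hc2 h]
      · rw [map_inf]
        exact le_inf ((inf_le_inf_left a inf_le_left).trans hle1)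
          ((inf_le_inf_left a inf_le_right).trans hle2)) with hFA
  set IA : Ideal A := mkIdeal {x | ∃ c, c ∈ u ∧ x ≤ f c}
    (fun hxy hx => by obtain ⟨c, hc, hle⟩ := hx; exact ⟨c, hc, hxy.trans hle⟩)
    (⟨⊥, u.bot_mem, bot_le⟩)
    (fun hx hy => by
      obtain ⟨c1, hc1, hle1⟩ := hx
      obtain ⟨c2, hc2, hle2⟩ := hy
      exact ⟨c1 ⊔ c2, u.sup_mem hc1 hc2, by rw [map_sup]; exact sup_le_sup hle1 hle2⟩) with hIA
  have hdisjA : Disjoint (FA : Set A) (IA : Set A) := by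
    rw [Set.disjoint_left]
    rintro x ⟨c, hc, hle⟩ ⟨c', hc', hle'⟩
    have h1 : a ⊓ f c ≤ f c' := hle.trans hle'
    have h2 : a ≤ f (c' ⊔ cᶜ) := by
      rw [map_sup, map_compl]
      have h3 : a ≤ f c ⇨ f c' := le_himp_iff.mpr h1
      rwa [himp_eq] at h3
    have h4 : c' ⊔ cᶜ ∉ u := hFu' _ h2
    exact h4 (u.sup_mem hc' (hu_prime.mem_or_compl_mem.resolve_left hc))
  obtain ⟨p, hp_prime, hIp, hFp⟩ :=
    DistribLattice.prime_ideal_of_disjoint_filter_ideal hdisjA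
  -- the filter and ideal on B
  set FB : PFilter B := mkPFilter {x | ∃ c, c ∉ u ∧ g c ≤ x ⊔ b}
    (fun hxy hx => by
      obtain ⟨c, hc, hle⟩ := hx
      exact ⟨c, hc, hle.trans (sup_le_sup_right hxy b)⟩)
    (⟨⊤, htopu, le_trans le_top le_sup_left⟩)
    (fun hx hy => by
      obtain ⟨c1, hc1, hle1⟩ := hx
      obtain ⟨c2, hc2, hle2⟩ := hy
      refine ⟨c1 ⊓ c2, fun hmem => ?_, ?_⟩
      · rcases hu_prime.mem_or_mem hmem with h | h
        exacts [hc1 h, hc2 h]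
      · rw [map_inf, sup_inf_right]
        exact inf_le_inf hle1 hle2) with hFB
  set IB : Ideal B := mkIdeal {x | ∃ c, c ∈ u ∧ x ≤ b ⊔ g c}
    (fun hxy hx => by obtain ⟨c, hc, hle⟩ := hx; exact ⟨c, hc, hxy.trans hle⟩)
    (⟨⊥, u.bot_mem, bot_le⟩)
    (fun hx hy => by
      obtain ⟨c1, hc1, hle1⟩ := hx
      obtain ⟨c2, hc2, hle2⟩ := hy
      refine ⟨c1 ⊔ c2, u.sup_mem hc1 hc2, ?_⟩
      rw [map_sup]
      exact sup_le (hle1.trans (sup_le_sup_left le_sup_left b))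
        (hle2.trans (sup_le_sup_left le_sup_right b))) with hIB
  have hdisjB : Disjoint (FB : Set B) (IB : Set B) := by
    rw [Set.disjoint_left]
    rintro x ⟨c, hc, hle⟩ ⟨c', hc', hle'⟩
    have h1 : g c ≤ b ⊔ g c' := by
      refine hle.trans (sup_le (hle'.trans ?_) le_sup_left)
      exact le_refl _
    have h2 : g (c \ c') ≤ b := by
      rw [map_sdiff]
      rw [sdiff_le_iff, sup_comm]
      exact h1
    have h3 : c \ c' ∈ u := hIu' _ h2
    have h4 : c ∈ u := u.lower le_sdiff_sup (u.sup_mem h3 hc')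
    exact hc h4
  obtain ⟨q, hq_prime, hIq, hFq⟩ :=
    DistribLattice.prime_ideal_of_disjoint_filter_ideal hdisjB
  -- wrap up
  have hFp' : ∀ x, x ∈ FA → x ∉ p := fun x hx => Set.disjoint_left.mp hFp hx
  have hFq' : ∀ x, x ∈ FB → x ∉ q := fun x hx => Set.disjoint_left.mp hFq hx
  refine ⟨p, q, hp_prime, hq_prime, fun c => ?_, ?_, ?_⟩
  · constructor
    · intro hfc
      have hcu : c ∈ u := by
        by_contra hcu
        exact hFp' (f c) ⟨c, hcu, inf_le_right⟩ hfc
      exact hIq ⟨c, hcu, le_sup_right⟩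
    · intro hgc
      have hcu : c ∈ u := by
        by_contra hcu
        exact hFq' (g c) ⟨c, hcu, le_sup_left⟩ hgc
      exact hIp ⟨c, hcu, le_refl _⟩
  · exact hFp' a ⟨⊤, htopu, inf_le_left⟩
  · exact hIq ⟨⊥, u.bot_mem, le_sup_left⟩

namespace Construction

attribute [local instance] BoundedLatticeHomClass.toBiheytingHomClass

variable {A B C : Type u} [BooleanAlgebra A] [BooleanAlgebra B] [BooleanAlgebra C]

lemma sup_mem_iff {P : Type u} [SemilatticeSup P] (I : Ideal P) (a b : P) :
    a ⊔ b ∈ I ↔ a ∈ I ∧ b ∈ I :=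
  ⟨fun h => ⟨I.lower le_sup_left h, I.lower le_sup_right h⟩, fun h => I.sup_mem h.1 h.2⟩

lemma inf_mem_iff {P : Type u} [Lattice P] {I : Ideal P} (hI : I.IsPrime) (a b : P) :
    a ⊓ b ∈ I ↔ a ∈ I ∨ b ∈ I :=
  ⟨hI.mem_or_mem, fun h => h.elim (fun h => I.lower inf_le_left h) (fun h => I.lower inf_le_right h)⟩

/-- The dual Stone space: pairs of prime ideals that agree on `C`. -/
def SX (f : BoundedLatticeHom C A) (g : BoundedLatticeHom C B) : Type u :=
  {x : Ideal A × Ideal B // x.1.IsPrime ∧ x.2.IsPrime ∧ ∀ c, f c ∈ x.1 ↔ g c ∈ x.2}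

variable (f : BoundedLatticeHom C A) (g : BoundedLatticeHom C B)

/-- The embedding of `A`. -/
def hHom : BoundedLatticeHom A (Set (SX f g)) where
  toFun a := {x | a ∉ x.1.1}
  map_sup' a b := by
    ext x
    simp only [Set.mem_setOf_eq, Set.sup_eq_union, Set.mem_union, sup_mem_iff]
    tauto
  map_inf' a b := by
    ext x
    simp only [Set.mem_setOf_eq, Set.inf_eq_inter, Set.mem_inter_iff, inf_mem_iff x.2.1]
    tauto
  map_top' := by
    ext x
    simp only [Set.mem_setOf_eq, Set.top_eq_univ, Set.mem_univ, iff_true]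
    exact x.2.1.toIsProper.top_notMem
  map_bot' := by
    ext x
    simp only [Set.mem_setOf_eq, Set.bot_eq_empty, Set.mem_empty_iff_false, iff_false, not_not]
    exact (x.1.1).bot_mem

/-- The embedding of `B`. -/
def kHom : BoundedLatticeHom B (Set (SX f g)) where
  toFun b := {x | b ∉ x.1.2}
  map_sup' a b := by
    ext x
    simp only [Set.mem_setOf_eq, Set.sup_eq_union, Set.mem_union, sup_mem_iff]
    tauto
  map_inf' a b := by
    ext x
    simp only [Set.mem_setOf_eq, Set.inf_eq_inter, Set.mem_inter_iff, inf_mem_iff x.2.2.1]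
    tauto
  map_top' := by
    ext x
    simp only [Set.mem_setOf_eq, Set.top_eq_univ, Set.mem_univ, iff_true]
    exact x.2.2.1.toIsProper.top_notMem
  map_bot' := by
    ext x
    simp only [Set.mem_setOf_eq, Set.bot_eq_empty, Set.mem_empty_iff_false, iff_false, not_not]
    exact (x.1.2).bot_mem

@[simp] lemma mem_hHom {a : A} {x : SX f g} : x ∈ hHom f g a ↔ a ∉ x.1.1 := Iff.rfl

@[simp] lemma mem_kHom {b : B} {x : SX f g} : x ∈ kHom f g b ↔ b ∉ x.1.2 := Iff.rfl

lemma hk_comm (c : C) : hHom f g (f c) = kHom f g (g c) :=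
  Set.ext fun x => not_congr (x.2.2.2 c)

lemma sup_sep {a : A} {b : B} (hab : ¬ ∃ c, a ≤ f c ∧ g c ≤ b) :
    ∃ x : SX f g, x ∈ hHom f g a ∧ x ∉ kHom f g b := by
  push_neg at hab
  obtain ⟨p, q, hp, hq, hiff, hap, hbq⟩ := aux f g hab
  exact ⟨⟨(p, q), hp, hq, hiff⟩, hap, fun h => h hbq⟩

lemma sup_lem {a : A} {b : B} (h : hHom f g a ≤ kHom f g b) : ∃ c, a ≤ f c ∧ g c ≤ b := by
  by_contra hc
  obtain ⟨x, hx1, hx2⟩ := sup_sep f g hc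
  exact hx2 (h hx1)

lemma sup_lem' {a : A} {b : B} (h : kHom f g b ≤ hHom f g a) : ∃ c, b ≤ g c ∧ f c ≤ a := by
  by_contra hc
  push_neg at hc
  obtain ⟨q, p, hq, hp, hiff, hbq, hap⟩ := aux g f hc
  exact (h (show (⟨(p, q), hp, hq, fun c => (hiff c).symm⟩ : SX f g) ∈ kHom f g b from hbq)) hap

lemma h_ne_bot (hg : Function.Injective g) {a : A} (ha : a ≠ ⊥) :
    ∃ x : SX f g, x ∈ hHom f g a := by
  have : ¬ ∃ c, a ≤ f c ∧ g c ≤ ⊥ := by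
    rintro ⟨c, h1, h2⟩
    have hc : c = ⊥ := hg (by rw [map_bot]; exact le_bot_iff.mp h2)
    exact ha (le_bot_iff.mp (by rwa [hc, map_bot] at h1))
  obtain ⟨x, hx, -⟩ := sup_sep f g this
  exact ⟨x, hx⟩

lemma k_ne_bot (hf : Function.Injective f) {b : B} (hb : b ≠ ⊥) :
    ∃ x : SX f g, x ∈ kHom f g b := by
  have hc : ∀ c, b ≤ g c → ¬ f c ≤ (⊥ : A) := by
    intro c h1 h2
    have hc : c = ⊥ := hf (by rw [map_bot]; exact le_bot_iff.mp h2)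
    exact hb (le_bot_iff.mp (by rwa [hc, map_bot] at h1))
  obtain ⟨q, p, hq, hp, hiff, hbq, hap⟩ := aux g f hc
  exact ⟨⟨(p, q), hp, hq, fun c => (hiff c).symm⟩, hbq⟩

lemma h_le (hg : Function.Injective g) {a a' : A} (hle : hHom f g a ≤ hHom f g a') : a ≤ a' := by
  rw [← sdiff_eq_bot_iff]
  by_contra hne
  obtain ⟨x, hx⟩ := h_ne_bot f g hg hne
  rw [map_sdiff] at hx
  simp only [Set.mem_diff] at hx
  exact hx.2 (hle hx.1)

lemma k_le (hf : Function.Injective f) {b b' : B} (hle : kHom f g b ≤ kHom f g b') : b ≤ b' := by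
  rw [← sdiff_eq_bot_iff]
  by_contra hne
  obtain ⟨x, hx⟩ := k_ne_bot f g hf hne
  rw [map_sdiff] at hx
  simp only [Set.mem_diff] at hx
  exact hx.2 (hle hx.1)

lemma h_inj (hg : Function.Injective g) : Function.Injective (hHom f g) := fun a a' heq =>
  le_antisymm (h_le f g hg heq.le) (h_le f g hg heq.ge)

lemma k_inj (hf : Function.Injective f) : Function.Injective (kHom f g) := fun b b' heq =>
  le_antisymm (k_le f g hf heq.le) (k_le f g hf heq.ge)

end Construction

end SuperAmalgAux

open SuperAmalgAux.Construction

/-- The class of Boolean algebras equipped with a closure operation has the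
superamalgamation property. -/
theorem boolean_algebra_with_closure_superamalgamation {A B C : Type u}
    [BooleanAlgebra A] [BooleanAlgebra B] [BooleanAlgebra C]
    (cA : A → A) (cB : B → B) (cC : C → C)
    (hAext : ∀ x, x ≤ cA x) (hAmono : Monotone cA) (hAidem : ∀ x, cA (cA x) = cA x)
    (hBext : ∀ x, x ≤ cB x) (hBmono : Monotone cB) (hBidem : ∀ x, cB (cB x) = cB x)
    (hCext : ∀ x, x ≤ cC x) (hCmono : Monotone cC) (hCidem : ∀ x, cC (cC x) = cC x)
    (f : BoundedLatticeHom C A) (g : BoundedLatticeHom C B)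
    (hf : Function.Injective f) (hg : Function.Injective g)
    (hfc : ∀ x, f (cC x) = cA (f x)) (hgc : ∀ x, g (cC x) = cB (g x)) :
    ∃ (D : Type u) (_ : BooleanAlgebra D) (cD : D → D)
      (h : BoundedLatticeHom A D) (k : BoundedLatticeHom B D),
      Function.Injective h ∧ Function.Injective k ∧
      (∀ x, x ≤ cD x) ∧ Monotone cD ∧ (∀ x, cD (cD x) = cD x) ∧
      (∀ a, h (cA a) = cD (h a)) ∧ (∀ b, k (cB b) = cD (k b)) ∧
      (∀ c, h (f c) = k (g c)) ∧
      (∀ a b, h a = k b → ∃ c, a = f c ∧ b = g c) ∧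
      (∀ a b, h a ≤ k b → ∃ c, a ≤ f c ∧ g c ≤ b) ∧
      (∀ a b, k b ≤ h a → ∃ c, b ≤ g c ∧ f c ≤ a) := by
  classical
  set D := Set (SX f g) with hD
  set h : BoundedLatticeHom A D := hHom f g with hh
  set k : BoundedLatticeHom B D := kHom f g with hk
  have hmonoh : Monotone h := OrderHomClass.mono h
  have hmonok : Monotone k := OrderHomClass.mono k
  set G : Set D := (Set.range fun a => h (cA a)) ∪ (Set.range fun b => k (cB b)) with hG
  set cD : D → D := fun S => ⋂₀ {T | T ∈ G ∧ S ⊆ T} with hcD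
  have hext : ∀ S, S ⊆ cD S := fun S => Set.subset_sInter fun T hT => hT.2
  have hmin : ∀ S T, T ∈ G → S ⊆ T → cD S ⊆ T := fun S T hTG hST =>
    Set.sInter_subset_of_mem ⟨hTG, hST⟩
  have hmonoD : Monotone cD := fun S S' hSS' =>
    Set.subset_sInter fun T hT => hmin S T hT.1 (hSS'.trans hT.2)
  have hidem : ∀ S, cD (cD S) = cD S := fun S =>
    Set.Subset.antisymm
      (Set.subset_sInter fun T hT => hmin (cD S) T hT.1 (hmin S T hT.1 hT.2))
      (hext (cD S))
  have hclosA : ∀ a, h (cA a) = cD (h a) := by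
    intro a
    apply Set.Subset.antisymm
    · apply Set.subset_sInter
      rintro T ⟨hTG, hsub⟩
      rcases hTG with ⟨a', rfl⟩ | ⟨b, rfl⟩
      · have h1 : a ≤ cA a' := h_le f g hg hsub
        have h2 : cA a ≤ cA a' := by rw [← hAidem a']; exact hAmono h1
        exact hmonoh h2
      · obtain ⟨c, hac, hgcb⟩ := sup_lem f g hsub
        have h1 : cA a ≤ f (cC c) := by rw [hfc]; exact hAmono hac
        have h2 : g (cC c) ≤ cB b := by
          rw [hgc, ← hBidem b]; exact hBmono hgcb
        calc (h (cA a) : D) ⊆ h (f (cC c)) := hmonoh h1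
          _ = k (g (cC c)) := hk_comm f g (cC c)
          _ ⊆ k (cB b) := hmonok h2
    · exact hmin (h a) _ (Or.inl ⟨a, rfl⟩) (hmonoh (hAext a))
  have hclosB : ∀ b, k (cB b) = cD (k b) := by
    intro b
    apply Set.Subset.antisymm
    · apply Set.subset_sInter
      rintro T ⟨hTG, hsub⟩
      rcases hTG with ⟨a, rfl⟩ | ⟨b', rfl⟩
      · obtain ⟨c, hbc, hfca⟩ := sup_lem' f g hsub
        have h1 : cB b ≤ g (cC c) := by rw [hgc]; exact hBmono hbc
        have h2 : f (cC c) ≤ cA a := by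
          rw [hfc, ← hAidem a]; exact hAmono hfca
        calc (k (cB b) : D) ⊆ k (g (cC c)) := hmonok h1
          _ = h (f (cC c)) := (hk_comm f g (cC c)).symm
          _ ⊆ h (cA a) := hmonoh h2
      · have h1 : b ≤ cB b' := k_le f g hf hsub
        have h2 : cB b ≤ cB b' := by rw [← hBidem b']; exact hBmono h1
        exact hmonok h2
    · exact hmin (k b) _ (Or.inr ⟨b, rfl⟩) (hmonok (hBext b))
  refine ⟨D, inferInstance, cD, h, k, h_inj f g hg, k_inj f g hf,
    hext, hmonoD, hidem, hclosA, hclosB, hk_comm f g, ?_, fun a b => sup_lem f g,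
    fun a b => sup_lem' f g⟩
  intro a b heq
  obtain ⟨c, hc1, hc2⟩ := sup_lem f g heq.le
  have e1 : h (f c) = h a := by
    apply le_antisymm
    · calc (h (f c) : D) = k (g c) := hk_comm f g c
        _ ≤ k b := hmonok hc2
        _ = h a := heq.symm
    · exact hmonoh hc1
  have e2 : k (g c) = k b := by rw [← hk_comm f g c, e1, heq]
  exact ⟨c, (h_inj f g hg e1).symm, (k_inj f g hf e2).symm⟩
end

section
/- The theory of join semilattices with a closure operation is locally finite: if S is a join semilattice equipped with a closure operation K, then for every finite subset X ⊆ S there exists a finite subset T ⊆ S with X ⊆ T such that T is closed under the join operation (a, b ∈ T implies a ⊔ b ∈ T) and closed under K (a ∈ T implies K(a) ∈ T). -/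
open Classical

namespace JSCaux

variable {S : Type*} [SemilatticeSup S]

open Classical in
noncomputable def m (K : S → S) (x0 : S) (A : Finset S) : S :=
  if h : A.Nonempty then K (A.sup' h id) else K x0

open Classical in
noncomputable def ssup (x0 : S) (D : Finset S) : S :=
  if h : D.Nonempty then D.sup' h id else x0

open Classical in
noncomputable def P (X : Finset S) : Finset (Finset S) :=
  X.powerset.filter Finset.Nonempty

open Classical in
noncomputable def Y (K : S → S) (x0 : S) (X : Finset S) : Finset S :=
  X ∪ (P X).image (m K x0)

open Classical in
noncomputable def f (K : S → S) (x0 : S) (X : Finset S) (y : S) : Finset S :=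
  if h : ∃ A ∈ P X, m K x0 A = y then h.choose else {y}

open Classical in
noncomputable def T (K : S → S) (x0 : S) (X : Finset S) : Finset S :=
  (Y K x0 X).powerset.image (ssup x0)

end JSCaux

/-- Local finiteness of join semilattices with a closure operation: every finite
subset is contained in a finite subset closed under joins and the closure. -/
theorem join_semilattice_with_closure_locallyFinite {S : Type*} [SemilatticeSup S]
    (K : S → S) (hext : ∀ x, x ≤ K x) (hmono : Monotone K)
    (hidem : ∀ x, K (K x) = K x) (X : Finset S) :
    ∃ T : Finset S, X ⊆ T ∧ (∀ a ∈ T, ∀ b ∈ T, a ⊔ b ∈ T) ∧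
      ∀ a ∈ T, K a ∈ T := by
  classical
  rcases X.eq_empty_or_nonempty with rfl | ⟨x0, hx0⟩
  · exact ⟨∅, by simp, by simp, by simp⟩
  open JSCaux in
  -- membership in P
  have memP : ∀ {A : Finset S}, A ∈ P X ↔ A ⊆ X ∧ A.Nonempty := by
    intro A; simp [P, Finset.mem_filter, Finset.mem_powerset]
  -- every element of T is ssup of a nonempty subset of Y
  have hT_char : ∀ t ∈ T K x0 X, ∃ D : Finset S, D ⊆ Y K x0 X ∧ D.Nonempty ∧ t = ssup x0 D := by
    intro t ht
    simp only [T, Finset.mem_image, Finset.mem_powerset] at ht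
    obtain ⟨D, hD, rfl⟩ := ht
    rcases D.eq_empty_or_nonempty with rfl | hne
    · refine ⟨{x0}, ?_, Finset.singleton_nonempty _, ?_⟩
      · simp [Y, Finset.mem_union, hx0]
      · simp [ssup]
    · exact ⟨D, hD, hne, rfl⟩
  have hmemT : ∀ {D : Finset S}, D ⊆ Y K x0 X → ssup x0 D ∈ T K x0 X := by
    intro D hD
    simp only [T, Finset.mem_image, Finset.mem_powerset]
    exact ⟨D, hD, rfl⟩
  -- f properties
  have hf : ∀ y ∈ Y K x0 X, f K x0 X y ⊆ X ∧ (f K x0 X y).Nonempty ∧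
      (∀ z ∈ f K x0 X y, z ≤ y) ∧
      (∀ (C : Finset S) (hC : C.Nonempty), C ⊆ X → f K x0 X y ⊆ C →
        y ≤ K (C.sup' hC id)) := by
    intro y hy
    by_cases h : ∃ A ∈ P X, m K x0 A = y
    · have hspec := h.choose_spec
      obtain ⟨hAP, hAy⟩ := hspec
      obtain ⟨hAX, hAne⟩ := memP.mp hAP
      have hfy : f K x0 X y = h.choose := by simp [f, h]
      have hm : m K x0 h.choose = K (h.choose.sup' hAne id) := dif_pos hAne
      have hyval : y = K (h.choose.sup' hAne id) := hAy.symm.trans hm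
      refine ⟨hfy ▸ hAX, hfy ▸ hAne, ?_, ?_⟩
      · intro z hz
        rw [hfy] at hz
        calc z ≤ h.choose.sup' hAne id := Finset.le_sup' id hz
          _ ≤ K (h.choose.sup' hAne id) := hext _
          _ = y := hyval.symm
      · intro C hC hCX hfC
        rw [hfy] at hfC
        rw [hyval]
        exact hmono (Finset.sup'_mono id hfC hAne)
    · have hyX : y ∈ X := by
        simp only [Y, Finset.mem_union, Finset.mem_image] at hy
        rcases hy with hy | ⟨A, hA, hAy⟩
        · exact hy
        · exact absurd ⟨A, hA, hAy⟩ h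
      have hfy : f K x0 X y = {y} := by simp [f, h]
      refine ⟨hfy ▸ (by simpa using hyX), hfy ▸ Finset.singleton_nonempty y, ?_, ?_⟩
      · intro z hz; rw [hfy, Finset.mem_singleton] at hz; exact hz.le
      · intro C hC hCX hfC
        have : y ∈ C := hfC (hfy ▸ Finset.mem_singleton_self y)
        calc y ≤ C.sup' hC id := Finset.le_sup' id this
          _ ≤ K (C.sup' hC id) := hext _
  refine ⟨T K x0 X, ?_, ?_, ?_⟩
  · -- X ⊆ T
    intro x hx
    have : ssup x0 {x} ∈ T K x0 X := hmemT (by simp [Y, Finset.mem_union, hx])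
    simpa [ssup] using this
  · -- closed under joins
    intro a ha b hb
    obtain ⟨D1, hD1, hne1, rfl⟩ := hT_char a ha
    obtain ⟨D2, hD2, hne2, rfl⟩ := hT_char b hb
    have hsub : D1 ∪ D2 ⊆ Y K x0 X := Finset.union_subset hD1 hD2
    have := hmemT hsub
    have e1 : ssup x0 D1 = D1.sup' hne1 id := dif_pos hne1
    have e2 : ssup x0 D2 = D2.sup' hne2 id := dif_pos hne2
    have e12 : ssup x0 (D1 ∪ D2) = (D1 ∪ D2).sup' (hne1.mono Finset.subset_union_left) id :=
      dif_pos _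
    have heq : ssup x0 (D1 ∪ D2) = ssup x0 D1 ⊔ ssup x0 D2 := by
      rw [e1, e2, e12]; exact Finset.sup'_union hne1 hne2 id
    rwa [heq] at this
  · -- closed under K
    intro a ha
    obtain ⟨D, hD, hne, rfl⟩ := hT_char a ha
    set C : Finset S := D.biUnion (f K x0 X) with hCdef
    have hCX : C ⊆ X := by
      intro z hz
      obtain ⟨y, hy, hzf⟩ := Finset.mem_biUnion.mp hz
      exact (hf y (hD hy)).1 hzf
    obtain ⟨y0, hy0⟩ := id hne
    have hCne : C.Nonempty := by
      obtain ⟨z, hz⟩ := (hf y0 (hD hy0)).2.1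
      exact ⟨z, Finset.mem_biUnion.mpr ⟨y0, hy0, hz⟩⟩
    have hssup : ssup x0 D = D.sup' hne id := dif_pos hne
    -- sup' C ≤ ssup D
    have h1 : C.sup' hCne id ≤ ssup x0 D := by
      rw [hssup]
      apply Finset.sup'_le
      intro z hz
      obtain ⟨y, hy, hzf⟩ := Finset.mem_biUnion.mp hz
      exact le_trans ((hf y (hD hy)).2.2.1 z hzf) (Finset.le_sup' id hy)
    -- ssup D ≤ K (sup' C)
    have h2 : ssup x0 D ≤ K (C.sup' hCne id) := by
      rw [hssup]
      apply Finset.sup'_le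
      intro y hy
      exact (hf y (hD hy)).2.2.2 C hCne hCX
        (fun z hz => Finset.mem_biUnion.mpr ⟨y, hy, hz⟩)
    have hKeq : K (ssup x0 D) = K (C.sup' hCne id) :=
      le_antisymm (by simpa [hidem] using hmono h2) (hmono h1)
    have em : m K x0 C = K (C.sup' hCne id) := dif_pos hCne
    have es : ssup x0 {m K x0 C} = ({m K x0 C} : Finset S).sup' (Finset.singleton_nonempty _) id :=
      dif_pos _
    have : K (C.sup' hCne id) = ssup x0 {m K x0 C} := by
      rw [es, Finset.sup'_singleton, em]; rfl
    rw [hKeq, this]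
    apply hmemT
    intro z hz
    rw [Finset.mem_singleton] at hz
    subst hz
    simp only [Y, Finset.mem_union, Finset.mem_image]
    exact Or.inr ⟨C, memP.mpr ⟨hCX, hCne⟩, rfl⟩
end
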